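/- arXiv:2001.00643 — 6 statements merged into one kernel-verified Lean document; each statement's English description precedes it below -/
import Mathlib

section
/- Let G = (V,E) be a b-dense subgraph of the complete bipartite graph with bipartition V = V₁ ∪ V₂, where |V₁| ≤ |V₂|. If |V₁| > b and |V₂| > 2b, then G is connected and contains a matching saturating all vertices of V₁. -/
open SimpleGraph

/-- The complete bipartite graph with parts `V₁` and `V₂`. -/
def completeBipartiteOn {V : Type*} (V₁ V₂ : Set V) : SimpleGraph V where
  Adj u v := u ≠ v ∧ ((u ∈ V₁ ∧ v ∈ V₂) ∨ (u ∈ V₂ ∧ v ∈ V₁))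
  symm := ⟨by
    rintro u v ⟨hne, h⟩
    exact ⟨hne.symm, by tauto⟩⟩
  loopless := ⟨fun v h => h.1 rfl⟩

lemma aux_inter {α : Type*} {A B C : Set α} (hC : C.Finite) (hA : A ⊆ C) (hB : B ⊆ C)
    (h : C.ncard < A.ncard + B.ncard) : (A ∩ B).Nonempty := by
  by_contra h'
  rw [Set.not_nonempty_iff_eq_empty] at h'
  have hd : Disjoint A B := Set.disjoint_iff_inter_eq_empty.mpr h'
  have h1 := Set.ncard_union_eq hd (hC.subset hA) (hC.subset hB)
  have hle := Set.ncard_le_ncard (Set.union_subset hA hB) hC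
  omega

/-- If G is a b-dense subgraph of the complete bipartite graph with parts V₁, V₂ where
|V₁| ≤ |V₂|, |V₁| > b and |V₂| > 2b, then G is connected and contains a matching
saturating all vertices of V₁. -/
theorem stmt6 {V : Type*} [Fintype V] (V₁ V₂ : Set V) (b : ℕ)
    (hcov : V₁ ∪ V₂ = Set.univ) (hdisj : Disjoint V₁ V₂)
    (hcard : V₁.ncard ≤ V₂.ncard)
    (G : SimpleGraph V) (hsub : G ≤ completeBipartiteOn V₁ V₂)
    (hdense : ∀ v : V,
      ((completeBipartiteOn V₁ V₂).neighborSet v).ncard < (G.neighborSet v).ncard + b)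
    (hb1 : b < V₁.ncard) (hb2 : 2 * b < V₂.ncard) :
    G.Connected ∧ ∃ M : G.Subgraph, M.IsMatching ∧ V₁ ⊆ M.verts := by
  classical
  have hfin1 : V₁.Finite := Set.toFinite _
  have hfin2 : V₂.Finite := Set.toFinite _
  -- neighbor sets in the complete bipartite graph
  have hNH1 : ∀ v ∈ V₁, (completeBipartiteOn V₁ V₂).neighborSet v = V₂ := by
    intro v hv
    have hv2 : v ∉ V₂ := Set.disjoint_left.mp hdisj hv
    ext w
    simp only [mem_neighborSet, completeBipartiteOn]
    constructor
    · rintro ⟨hne, ⟨_, hw⟩ | ⟨hv', _⟩⟩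
      · exact hw
      · exact absurd hv' hv2
    · intro hw
      exact ⟨fun h => hv2 (h ▸ hw), Or.inl ⟨hv, hw⟩⟩
  have hNH2 : ∀ v ∈ V₂, (completeBipartiteOn V₁ V₂).neighborSet v = V₁ := by
    intro v hv
    have hv1 : v ∉ V₁ := Set.disjoint_right.mp hdisj hv
    ext w
    simp only [mem_neighborSet, completeBipartiteOn]
    constructor
    · rintro ⟨hne, ⟨hv', _⟩ | ⟨_, hw⟩⟩
      · exact absurd hv' hv1
      · exact hw
    · intro hw
      exact ⟨fun h => hv1 (h ▸ hw), Or.inr ⟨hv, hw⟩⟩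
  -- degree lower bounds
  have hdeg1 : ∀ v ∈ V₁, V₂.ncard < (G.neighborSet v).ncard + b := by
    intro v hv
    have := hdense v
    rwa [hNH1 v hv] at this
  have hdeg2 : ∀ v ∈ V₂, V₁.ncard < (G.neighborSet v).ncard + b := by
    intro v hv
    have := hdense v
    rwa [hNH2 v hv] at this
  -- neighbors lie in the opposite part
  have hloc1 : ∀ v ∈ V₁, G.neighborSet v ⊆ V₂ := by
    intro v hv w hw
    have hv2 : v ∉ V₂ := Set.disjoint_left.mp hdisj hv
    have := hsub hw
    rcases this with ⟨_, ⟨_, hw2⟩ | ⟨hv', _⟩⟩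
    · exact hw2
    · exact absurd hv' hv2
  have hloc2 : ∀ v ∈ V₂, G.neighborSet v ⊆ V₁ := by
    intro v hv w hw
    have hv1 : v ∉ V₁ := Set.disjoint_right.mp hdisj hv
    have := hsub hw
    rcases this with ⟨_, ⟨hv', _⟩ | ⟨_, hw1⟩⟩
    · exact absurd hv' hv1
    · exact hw1
  -- connectivity
  have hV₁ne : V₁.Nonempty := Set.nonempty_of_ncard_ne_zero (by omega)
  have hreach1 : ∀ u : V, ∃ v ∈ V₁, G.Reachable u v := by
    intro u
    rcases (Set.eq_univ_iff_forall.mp hcov u) with hu | hu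
    · exact ⟨u, hu, Reachable.refl u⟩
    · have hpos : 0 < (G.neighborSet u).ncard := by have := hdeg2 u hu; omega
      obtain ⟨w, hw⟩ := Set.nonempty_of_ncard_ne_zero (s := G.neighborSet u) (by omega)
      exact ⟨w, hloc2 u hu hw, (hw : G.Adj u w).reachable⟩
  have hreach2 : ∀ v ∈ V₁, ∀ v' ∈ V₁, G.Reachable v v' := by
    intro v hv v' hv'
    have h1 := hdeg1 v hv
    have h2 := hdeg1 v' hv'
    obtain ⟨w, hw1, hw2⟩ := aux_inter (A := G.neighborSet v) (B := G.neighborSet v')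
      hfin2 (hloc1 v hv) (hloc1 v' hv') (by omega)
    exact (hw1 : G.Adj v w).reachable.trans (hw2 : G.Adj v' w).reachable.symm
  have hconn : G.Connected := by
    rw [connected_iff]
    refine ⟨fun u w => ?_, ⟨hV₁ne.choose⟩⟩
    obtain ⟨v, hv, huv⟩ := hreach1 u
    obtain ⟨v', hv', hwv'⟩ := hreach1 w
    exact (huv.trans (hreach2 v hv v' hv')).trans hwv'.symm
  refine ⟨hconn, ?_⟩
  -- Hall's condition
  set t : ↥V₁ → Finset V := fun x => (G.neighborSet ↑x).toFinset with ht
  have htcard : ∀ x : ↥V₁, (t x).card = (G.neighborSet ↑x).ncard := by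
    intro x
    rw [Set.ncard_eq_toFinset_card']
  have hcardV1 : Fintype.card ↥V₁ = V₁.ncard := by
    rw [← Nat.card_coe_set_eq, Nat.card_eq_fintype_card]
  have hhall : ∀ s : Finset ↥V₁, s.card ≤ (s.biUnion t).card := by
    intro s
    rcases s.eq_empty_or_nonempty with rfl | ⟨x, hx⟩
    · simp
    by_cases hsmall : s.card + b ≤ V₂.ncard
    · have hsub' : t x ⊆ s.biUnion t := Finset.subset_biUnion_of_mem t hx
      have h1 := Finset.card_le_card hsub'
      have h2 := hdeg1 ↑x x.2
      have := htcard x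
      omega
    · -- s is big; every vertex of V₂ has a neighbor in s
      push_neg at hsmall
      have hbig : V₂.toFinset ⊆ s.biUnion t := by
        intro u hu
        rw [Set.mem_toFinset] at hu
        have hcommon : ((Subtype.val '' (↑s : Set ↥V₁)) ∩ G.neighborSet u).Nonempty := by
          apply aux_inter hfin1 _ (hloc2 u hu)
          · have himg : (Subtype.val '' (↑s : Set ↥V₁)).ncard = s.card := by
              rw [Set.ncard_image_of_injective _ Subtype.val_injective,
                Set.ncard_coe_finset]
            have := hdeg2 u hu
            omega
          · rintro w ⟨y, _, rfl⟩
            exact y.2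
        obtain ⟨w, ⟨y, hy, rfl⟩, hw⟩ := hcommon
        rw [Finset.mem_biUnion]
        refine ⟨y, hy, ?_⟩
        rw [ht, Set.mem_toFinset]
        exact (hw : G.Adj u ↑y).symm
      have h1 := Finset.card_le_card hbig
      have h2 : V₂.toFinset.card = V₂.ncard := (Set.ncard_eq_toFinset_card' V₂).symm
      have h3 : s.card ≤ Fintype.card ↥V₁ := Finset.card_le_univ s
      omega
  obtain ⟨f, hfinj, hf⟩ := (Finset.all_card_le_biUnion_card_iff_exists_injective t).mp hhall
  have hfadj : ∀ x : ↥V₁, G.Adj ↑x (f x) := by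
    intro x
    have := hf x
    rw [ht, Set.mem_toFinset] at this
    exact this
  have hfV2 : ∀ x : ↥V₁, f x ∈ V₂ := fun x => hloc1 ↑x x.2 (hfadj x)
  -- construct the matching
  refine ⟨{
    verts := V₁ ∪ Set.range (fun x : ↥V₁ => f x)
    Adj := fun u w => ∃ x : ↥V₁, (u = ↑x ∧ w = f x) ∨ (w = ↑x ∧ u = f x)
    adj_sub := by
      rintro u w ⟨x, ⟨rfl, rfl⟩ | ⟨rfl, rfl⟩⟩
      · exact hfadj x
      · exact (hfadj x).symm
    edge_vert := by
      rintro u w ⟨x, ⟨rfl, _⟩ | ⟨_, rfl⟩⟩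
      · exact Or.inl x.2
      · exact Or.inr ⟨x, rfl⟩
    symm := ⟨by
      rintro u w ⟨x, h | h⟩
      exacts [⟨x, Or.inr h⟩, ⟨x, Or.inl h⟩]⟩ }, ?_, Set.subset_union_left⟩
  rintro v (hv | ⟨x, rfl⟩)
  · refine ⟨f ⟨v, hv⟩, ⟨⟨v, hv⟩, Or.inl ⟨rfl, rfl⟩⟩, ?_⟩
    rintro w ⟨y, ⟨hy1, rfl⟩ | ⟨rfl, hy2⟩⟩
    · have : (⟨v, hv⟩ : ↥V₁) = y := Subtype.ext hy1
      rw [this]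
    · exact absurd hv (Set.disjoint_right.mp hdisj (hy2 ▸ hfV2 y))
  · refine ⟨↑x, ⟨x, Or.inr ⟨rfl, rfl⟩⟩, ?_⟩
    rintro w ⟨y, ⟨hy1, _⟩ | ⟨rfl, hy2⟩⟩
    · have hxy : (f x : V) = ↑y := hy1
      exact absurd (show f x ∈ V₁ by rw [hxy]; exact y.2)
        (Set.disjoint_right.mp hdisj (hfV2 x))
    · rw [hfinj hy2]
end

section
/- Let G = (V,E) be a graph on N vertices with minimum degree at least N − N/8, whose edges are coloured with three colours, and let F₁ = (V₁,E₁) and F₂ = (V₂,E₂) be monochromatic components of the first and the second colour, respectively. Then either there exists a monochromatic component of the third colour which contains a matching saturating N/2 vertices, or min{|V₁ \ V₂|, |V₂ \ V₁|} < N/4. -/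
open SimpleGraph

/-- The subgraph of `G` spanned by the edges of colour `i` under the edge-colouring `c`. -/
def colourGraph {V : Type*} (G : SimpleGraph V) (c : Sym2 V → Fin 3) (i : Fin 3) :
    SimpleGraph V where
  Adj u v := G.Adj u v ∧ c s(u, v) = i
  symm := ⟨fun u v h => ⟨h.1.symm, by rw [Sym2.eq_swap]; exact h.2⟩⟩
  loopless := ⟨fun v h => G.loopless.irrefl v h.1⟩

lemma key {N : ℕ} (hN : 0 < N) (H : SimpleGraph (Fin N)) [DecidableRel H.Adj] (A B : Finset (Fin N))
    (hdisj : Disjoint A B)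
    (hA : (N : ℝ) ≤ 4 * A.card) (hB : (N : ℝ) ≤ 4 * B.card)
    (hAB : A.card ≤ B.card)
    (hmA : ∀ a ∈ A, (((B.filter fun b => ¬ H.Adj a b).card : ℝ)) ≤ (N : ℝ)/8 - 1)
    (hmB : ∀ b ∈ B, (((A.filter fun a => ¬ H.Adj b a).card : ℝ)) ≤ (N : ℝ)/8 - 1) :
    ∃ (M : H.Subgraph) (K : H.ConnectedComponent),
      M.IsMatching ∧ M.verts ⊆ K.supp ∧ (N : ℝ)/2 ≤ M.verts.ncard := by
  classical
  have hApos : 0 < A.card := by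
    by_contra h
    push_neg at h
    interval_cases hc : A.card
    simp only [Nat.cast_zero, mul_zero] at hA
    have : (0:ℝ) < N := by exact_mod_cast hN
    linarith
  obtain ⟨a₀, ha₀⟩ : A.Nonempty := Finset.card_pos.mp hApos
  -- Hall's condition
  have hall : ∀ s : Finset ↥A, s.card ≤ (s.biUnion fun a : ↥A => B.filter fun b => H.Adj ↑a b).card := by
    intro s
    by_cases hbig : ∀ b ∈ B, ∃ a ∈ s, H.Adj ↑a b
    · have hsub : B ⊆ s.biUnion fun a : ↥A => B.filter fun b => H.Adj ↑a b := by
        intro b hb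
        obtain ⟨a, has, hadj⟩ := hbig b hb
        exact Finset.mem_biUnion.mpr ⟨a, has, Finset.mem_filter.mpr ⟨hb, hadj⟩⟩
      calc s.card ≤ Fintype.card ↥A := Finset.card_le_univ s
        _ = A.card := Fintype.card_coe A
        _ ≤ B.card := hAB
        _ ≤ _ := Finset.card_le_card hsub
    · push_neg at hbig
      obtain ⟨b, hb, hnone⟩ := hbig
      -- s is small
      have hsmall : (s.card : ℝ) ≤ (N : ℝ)/8 - 1 := by
        have hsub : s.image (fun a : ↥A => (a : Fin N)) ⊆ A.filter fun a => ¬ H.Adj b a := by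
          intro x hx
          obtain ⟨a, has, rfl⟩ := Finset.mem_image.mp hx
          refine Finset.mem_filter.mpr ⟨a.2, fun h => hnone a has (h.symm)⟩
        have := Finset.card_le_card hsub
        rw [Finset.card_image_of_injective _ Subtype.coe_injective] at this
        calc (s.card : ℝ) ≤ ((A.filter fun a => ¬ H.Adj b a).card : ℝ) := by exact_mod_cast this
          _ ≤ (N : ℝ)/8 - 1 := hmB b hb
      rcases s.eq_empty_or_nonempty with rfl | ⟨a, has⟩
      · simp
      · have hsub : (B.filter fun x => H.Adj ↑a x) ⊆ s.biUnion fun a : ↥A => B.filter fun b => H.Adj ↑a b :=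
          Finset.subset_biUnion_of_mem (fun a : ↥A => B.filter fun b => H.Adj ↑a b) has
        have h1 : ((B.filter fun x => H.Adj ↑a x).card : ℝ) + ((B.filter fun x => ¬ H.Adj ↑a x).card : ℝ) = B.card := by
          exact_mod_cast Finset.card_filter_add_card_filter_not (fun x => H.Adj ↑a x)
        have h2 := hmA ↑a a.2
        have h3 := Finset.card_le_card hsub
        have : (s.card : ℝ) ≤ ((s.biUnion fun a : ↥A => B.filter fun b => H.Adj ↑a b).card : ℝ) := by
          have : ((B.filter fun x => H.Adj ↑a x).card : ℝ) ≤ ((s.biUnion fun a : ↥A => B.filter fun b => H.Adj ↑a b).card : ℝ) := by exact_mod_cast h3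
          nlinarith
        exact_mod_cast this
  obtain ⟨f, hfinj, hf⟩ := (Finset.all_card_le_biUnion_card_iff_existsInjective'
    (fun a : ↥A => B.filter fun b => H.Adj ↑a b)).mp hall
  have hfB : ∀ a : ↥A, f a ∈ B := fun a => (Finset.mem_filter.mp (hf a)).1
  have hfadj : ∀ a : ↥A, H.Adj ↑a (f a) := fun a => (Finset.mem_filter.mp (hf a)).2
  set f' : Fin N → Fin N := fun x => if h : x ∈ A then f ⟨x, h⟩ else x with hf'
  have hf'B : ∀ a ∈ A, f' a ∈ B := fun a ha => by simp only [hf', dif_pos ha]; exact hfB ⟨a, ha⟩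
  have hf'adj : ∀ a ∈ A, H.Adj a (f' a) := fun a ha => by simp only [hf', dif_pos ha]; exact hfadj ⟨a, ha⟩
  have hf'inj : ∀ a ∈ A, ∀ a' ∈ A, f' a = f' a' → a = a' := by
    intro a ha a' ha' h
    simp only [hf', dif_pos ha, dif_pos ha'] at h
    exact congrArg Subtype.val (hfinj h)
  have hnotB : ∀ a ∈ A, a ∉ B := fun a ha hb => (Finset.disjoint_left.mp hdisj) ha hb
  -- the matching subgraph
  set M : H.Subgraph :=
    { verts := ↑A ∪ f' '' ↑A
      Adj := fun u v => (u ∈ A ∧ v = f' u) ∨ (v ∈ A ∧ u = f' v)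
      adj_sub := by
        rintro u v (⟨h, rfl⟩ | ⟨h, rfl⟩)
        · exact hf'adj u h
        · exact (hf'adj v h).symm
      edge_vert := by
        rintro u v (⟨h, rfl⟩ | ⟨h, rfl⟩)
        · exact Or.inl h
        · exact Or.inr ⟨v, h, rfl⟩
      symm := ⟨by rintro u v (h | h); exact Or.inr h; exact Or.inl h⟩ } with hM
  have hmatch : M.IsMatching := by
    rintro v (hv | ⟨a, ha, rfl⟩)
    · refine ⟨f' v, Or.inl ⟨hv, rfl⟩, ?_⟩
      rintro w (⟨_, rfl⟩ | ⟨hw, hvw⟩)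
      · rfl
      · exact absurd (hvw ▸ hf'B w hw) (hnotB v hv)
    · refine ⟨a, Or.inr ⟨ha, rfl⟩, ?_⟩
      rintro w (⟨hw, hww⟩ | ⟨hw, hvw⟩)
      · exact absurd hw (fun hw => hnotB _ hw (hf'B a ha))
      · exact hf'inj w hw a ha hvw.symm
  -- all matched vertices in one component
  have hreachA : ∀ a ∈ A, H.Reachable a₀ a := by
    intro a ha
    have hlt : ((B.filter fun b => ¬ H.Adj a₀ b) ∪ (B.filter fun b => ¬ H.Adj a b)).card < B.card := by
      have h1 := hmA a₀ ha₀
      have h2 := hmA a ha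
      have h3 : (((B.filter fun b => ¬ H.Adj a₀ b) ∪ (B.filter fun b => ¬ H.Adj a b)).card : ℝ)
          ≤ ((B.filter fun b => ¬ H.Adj a₀ b).card : ℝ) + ((B.filter fun b => ¬ H.Adj a b).card : ℝ) := by
        exact_mod_cast Finset.card_union_le _ _
      have : (((B.filter fun b => ¬ H.Adj a₀ b) ∪ (B.filter fun b => ¬ H.Adj a b)).card : ℝ) < (B.card : ℝ) := by nlinarith
      exact_mod_cast this
    obtain ⟨b, hbB, hbn⟩ : ∃ b ∈ B, b ∉ (B.filter fun b => ¬ H.Adj a₀ b) ∪ (B.filter fun b => ¬ H.Adj a b) := by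
      by_contra h
      push_neg at h
      exact absurd (Finset.card_le_card fun b hb => h b hb) (not_le.mpr hlt)
    rw [Finset.mem_union, not_or, Finset.mem_filter, Finset.mem_filter] at hbn
    have h1 : H.Adj a₀ b := by
      by_contra h
      exact hbn.1 ⟨hbB, h⟩
    have h2 : H.Adj a b := by
      by_contra h
      exact hbn.2 ⟨hbB, h⟩
    exact h1.reachable.trans h2.symm.reachable
  refine ⟨M, H.connectedComponentMk a₀, hmatch, ?_, ?_⟩
  · rintro v (hv | ⟨a, ha, rfl⟩)
    · exact (ConnectedComponent.mem_supp_iff _ _).mpr (ConnectedComponent.sound (hreachA v hv)).symm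
    · exact (ConnectedComponent.mem_supp_iff _ _).mpr
        (ConnectedComponent.sound ((hreachA a ha).trans (hf'adj a ha).reachable)).symm
  · have hdisj2 : Disjoint (↑A : Set (Fin N)) (f' '' ↑A) := by
      rw [Set.disjoint_left]
      rintro x hx ⟨a, ha, rfl⟩
      exact hnotB _ hx (hf'B a ha)
    have hcard : M.verts.ncard = A.card + A.card := by
      have : M.verts = (↑A : Set (Fin N)) ∪ f' '' ↑A := rfl
      rw [this, Set.ncard_union_eq hdisj2 (Set.toFinite _) (Set.toFinite _),
        Set.ncard_image_of_injOn (s := (↑A : Set (Fin N)))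
          (fun x hx y hy h => hf'inj x (Finset.mem_coe.mp hx) y (Finset.mem_coe.mp hy) h),
        Set.ncard_coe_finset]
    rw [hcard]
    push_cast
    linarith

/-- Let G be a graph on N vertices with minimum degree at least N − N/8, 3-edge-coloured,
and let K₁, K₂ be monochromatic components of the first and second colour. Then either
there is a component of the third colour containing a matching saturating N/2 vertices,
or min{|V₁ \ V₂|, |V₂ \ V₁|} < N/4. -/

theorem stmt7 (N : ℕ) (G : SimpleGraph (Fin N))
    (hdeg : ∀ v, (N : ℝ) - (N : ℝ) / 8 ≤ (G.neighborSet v).ncard)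
    (c : Sym2 (Fin N) → Fin 3)
    (K₁ : (colourGraph G c 0).ConnectedComponent)
    (K₂ : (colourGraph G c 1).ConnectedComponent) :
    (∃ (M : (colourGraph G c 2).Subgraph) (K : (colourGraph G c 2).ConnectedComponent),
        M.IsMatching ∧ M.verts ⊆ K.supp ∧ (N : ℝ) / 2 ≤ M.verts.ncard) ∨
      min (((K₁.supp \ K₂.supp).ncard : ℝ)) (((K₂.supp \ K₁.supp).ncard : ℝ)) <
        (N : ℝ) / 4 := by
  classical
  obtain ⟨v₀⟩ := K₁.exists_rep
  have hN : 0 < N := Fin.pos v₀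
  by_cases hmin : min (((K₁.supp \ K₂.supp).ncard : ℝ)) (((K₂.supp \ K₁.supp).ncard : ℝ)) <
      (N : ℝ) / 4
  · exact Or.inr hmin
  push_neg at hmin
  rw [le_min_iff] at hmin
  left
  set H := colourGraph G c 2 with hH
  set A : Finset (Fin N) := (K₁.supp \ K₂.supp).toFinset with hAdef
  set B : Finset (Fin N) := (K₂.supp \ K₁.supp).toFinset with hBdef
  have hAcard : (K₁.supp \ K₂.supp).ncard = A.card := Set.ncard_eq_toFinset_card' _
  have hBcard : (K₂.supp \ K₁.supp).ncard = B.card := Set.ncard_eq_toFinset_card' _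
  have hA : (N : ℝ) ≤ 4 * A.card := by
    have := hmin.1; rw [hAcard] at this; linarith
  have hB : (N : ℝ) ≤ 4 * B.card := by
    have := hmin.2; rw [hBcard] at this; linarith
  have hmemA : ∀ a, a ∈ A ↔ (a ∈ K₁.supp ∧ a ∉ K₂.supp) := by
    intro a; rw [hAdef, Set.mem_toFinset]; rfl
  have hmemB : ∀ b, b ∈ B ↔ (b ∈ K₂.supp ∧ b ∉ K₁.supp) := by
    intro b; rw [hBdef, Set.mem_toFinset]; rfl
  have hdisj : Disjoint A B := by
    rw [Finset.disjoint_left]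
    intro a haA haB
    exact ((hmemB a).mp haB).2 ((hmemA a).mp haA).1
  -- any G-edge between A and B has colour 2
  have hcol : ∀ a ∈ A, ∀ b ∈ B, G.Adj a b → H.Adj a b := by
    intro a ha b hb hadj
    obtain ⟨ha1, ha2⟩ := (hmemA a).mp ha
    obtain ⟨hb1, hb2⟩ := (hmemB b).mp hb
    have h0 : c s(a, b) ≠ 0 := by
      intro h
      have hadj0 : (colourGraph G c 0).Adj a b := ⟨hadj, h⟩
      apply hb2
      rw [ConnectedComponent.mem_supp_iff] at ha1 ⊢
      rw [← ha1]
      exact (ConnectedComponent.sound hadj0.symm.reachable)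
    have h1 : c s(a, b) ≠ 1 := by
      intro h
      have hadj1 : (colourGraph G c 1).Adj a b := ⟨hadj, h⟩
      apply ha2
      rw [ConnectedComponent.mem_supp_iff] at hb1 ⊢
      rw [← hb1]
      exact (ConnectedComponent.sound hadj1.reachable)
    have h2 : c s(a, b) = 2 := by
      have : ∀ i : Fin 3, i ≠ 0 → i ≠ 1 → i = 2 := by decide
      exact this _ h0 h1
    exact ⟨hadj, h2⟩
  -- miss bounds
  have hmiss : ∀ (a : Fin N) (S : Finset (Fin N)), a ∉ S →
      (∀ b ∈ S, G.Adj a b → H.Adj a b) →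
      ((S.filter fun b => ¬ H.Adj a b).card : ℝ) ≤ (N : ℝ)/8 - 1 := by
    intro a S haS hSadj
    have hsub : (S.filter fun b => ¬ H.Adj a b) ⊆
        Finset.univ \ insert a (G.neighborFinset a) := by
      intro b hb
      rw [Finset.mem_filter] at hb
      rw [Finset.mem_sdiff, Finset.mem_insert, SimpleGraph.mem_neighborFinset]
      refine ⟨Finset.mem_univ _, ?_⟩
      rintro (rfl | hadj)
      · exact haS hb.1
      · exact hb.2 (hSadj b hb.1 hadj)
    have hcard := Finset.card_le_card hsub
    have hins : (insert a (G.neighborFinset a)).card = G.degree a + 1 := by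
      rw [Finset.card_insert_of_notMem (by simp), SimpleGraph.degree]
    have hsd : (Finset.univ \ insert a (G.neighborFinset a)).card
        = N - (G.degree a + 1) := by
      rw [Finset.card_sdiff_of_subset (Finset.subset_univ _), hins, Finset.card_univ, Fintype.card_fin]
    have hdegN : G.degree a + 1 ≤ N := by
      have : insert a (G.neighborFinset a) ⊆ Finset.univ := Finset.subset_univ _
      have := Finset.card_le_card this
      rwa [hins, Finset.card_univ, Fintype.card_fin] at this
    have hdeg' : (N : ℝ) - (N : ℝ)/8 ≤ G.degree a := by
      have := hdeg a
      rwa [Set.ncard_eq_toFinset_card', ← SimpleGraph.neighborFinset_def] at this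
    have : ((Finset.univ \ insert a (G.neighborFinset a)).card : ℝ)
        = (N : ℝ) - (G.degree a + 1) := by
      rw [hsd]
      push_cast [Nat.cast_sub hdegN]
      ring
    have hcc : ((S.filter fun b => ¬ H.Adj a b).card : ℝ)
        ≤ ((Finset.univ \ insert a (G.neighborFinset a)).card : ℝ) := by exact_mod_cast hcard
    rw [this] at hcc
    linarith
  have hmA : ∀ a ∈ A, ((B.filter fun b => ¬ H.Adj a b).card : ℝ) ≤ (N : ℝ)/8 - 1 := by
    intro a ha
    exact hmiss a B (Finset.disjoint_left.mp hdisj ha) (fun b hb => hcol a ha b hb)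
  have hmB : ∀ b ∈ B, ((A.filter fun a => ¬ H.Adj b a).card : ℝ) ≤ (N : ℝ)/8 - 1 := by
    intro b hb
    exact hmiss b A (Finset.disjoint_right.mp hdisj hb)
      (fun a ha hadj => (hcol a ha b hb hadj.symm).symm)
  rcases le_total A.card B.card with hle | hle
  · exact key hN H A B hdisj hA hB hle hmA hmB
  · exact key hN H B A hdisj.symm hB hA hle hmB hmA
end

section
/- Let G = (V,E) be a graph on N vertices with minimum degree at least N − N/8, whose edges are coloured with three colours. If G contains no monochromatic component with a matching saturating at least N/2 vertices, then any two monochromatic components of different colours, each having at least N/2 vertices, share more than N/4 vertices. -/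
open SimpleGraph

lemma third_colour (i j : Fin 3) (hij : i ≠ j) :
    ∃ k : Fin 3, k ≠ i ∧ k ≠ j ∧ ∀ x : Fin 3, x = i ∨ x = j ∨ x = k := by
  revert hij; revert i j; decide

lemma aux8 (N : ℕ) (G : SimpleGraph (Fin N))
    (hdeg : ∀ v, (N : ℝ) - (N : ℝ) / 8 ≤ (G.neighborSet v).ncard)
    (c : Sym2 (Fin N) → Fin 3)
    (hno : ¬ ∃ (i : Fin 3) (M : (colourGraph G c i).Subgraph)
        (K : (colourGraph G c i).ConnectedComponent),
        M.IsMatching ∧ M.verts ⊆ K.supp ∧ (N : ℝ) / 2 ≤ M.verts.ncard)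
    (i j : Fin 3) (hij : i ≠ j)
    (Ki : (colourGraph G c i).ConnectedComponent)
    (Kj : (colourGraph G c j).ConnectedComponent)
    (hKi : (N : ℝ) / 2 ≤ Ki.supp.ncard) (hKj : (N : ℝ) / 2 ≤ Kj.supp.ncard)
    (hint : ((Ki.supp ∩ Kj.supp).ncard : ℝ) ≤ (N : ℝ) / 4)
    (hAB : (Ki.supp \ Kj.supp).ncard ≤ (Kj.supp \ Ki.supp).ncard) :
    False := by
  classical
  obtain ⟨v0, -⟩ := Ki.exists_rep
  have hN : 0 < N := v0.pos
  set q := N / 8 with hq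
  have hABf : (Ki.supp.toFinset \ Kj.supp.toFinset).card ≤
      (Kj.supp.toFinset \ Ki.supp.toFinset).card := by
    rwa [Set.ncard_eq_toFinset_card' _, Set.ncard_eq_toFinset_card' _,
      Set.toFinset_diff, Set.toFinset_diff] at hAB
  clear hAB
  set A := Ki.supp.toFinset \ Kj.supp.toFinset with hAdef
  set B := Kj.supp.toFinset \ Ki.supp.toFinset with hBdef
  -- cardinalities
  have hKicard : Ki.supp.ncard = Ki.supp.toFinset.card := Set.ncard_eq_toFinset_card' _
  have hKjcard : Kj.supp.ncard = Kj.supp.toFinset.card := Set.ncard_eq_toFinset_card' _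
  have hIcard : (Ki.supp ∩ Kj.supp).ncard = (Ki.supp.toFinset ∩ Kj.supp.toFinset).card := by
    rw [Set.ncard_eq_toFinset_card', Set.toFinset_inter]
  have h1 : (Ki.supp.toFinset ∩ Kj.supp.toFinset).card + A.card = Ki.supp.toFinset.card :=
    Finset.card_inter_add_card_sdiff _ _
  have h2 : (Kj.supp.toFinset ∩ Ki.supp.toFinset).card + B.card = Kj.supp.toFinset.card :=
    Finset.card_inter_add_card_sdiff _ _
  have h21 : (Kj.supp.toFinset ∩ Ki.supp.toFinset) = (Ki.supp.toFinset ∩ Kj.supp.toFinset) :=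
    Finset.inter_comm _ _
  rw [hKicard] at hKi
  rw [hKjcard] at hKj
  rw [hIcard] at hint
  have hA4 : N ≤ 4 * A.card := by
    have : (N : ℝ) ≤ 4 * A.card := by
      have hc : ((Ki.supp.toFinset ∩ Kj.supp.toFinset).card : ℝ) + A.card
          = Ki.supp.toFinset.card := by exact_mod_cast h1
      linarith
    exact_mod_cast this
  have hB4 : N ≤ 4 * B.card := by
    have : (N : ℝ) ≤ 4 * B.card := by
      have hc : ((Ki.supp.toFinset ∩ Kj.supp.toFinset).card : ℝ) + B.card
          = Kj.supp.toFinset.card := by rw [← h21]; exact_mod_cast h2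
      linarith
    exact_mod_cast this
  have h8q : 8 * q ≤ N := by omega
  have hqA : 2 * q ≤ A.card := by omega
  have hqB : 2 * q ≤ B.card := by omega
  -- non-neighbour bound
  have hnon : ∀ v : Fin N, ∀ T : Finset (Fin N), v ∉ T →
      (T.filter (fun w => ¬ G.Adj v w)).card + 1 ≤ q := by
    intro v T hvT
    have hdegv : N ≤ (Finset.univ.filter (fun w => G.Adj v w)).card + q := by
      have h1 : (G.neighborSet v).ncard = (Finset.univ.filter (fun w => G.Adj v w)).card := by
        rw [Set.ncard_eq_toFinset_card']
        congr 1
        ext w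
        simp [SimpleGraph.mem_neighborSet]
      have h2 := hdeg v
      rw [h1] at h2
      by_contra hcon
      push_neg at hcon
      have h3 : (8 : ℝ) * ((q : ℝ) + 1) ≤ N := by
        have hc : ((Finset.univ.filter (fun w => G.Adj v w)).card : ℝ) + (q + 1) ≤ N := by
          exact_mod_cast hcon
        linarith
      have h4 : 8 * (q + 1) ≤ N := by exact_mod_cast h3
      omega
    have hsub : T.filter (fun w => ¬ G.Adj v w) ⊆
        (Finset.univ.filter (fun w => ¬ G.Adj v w)).erase v := by
      intro w hw
      simp only [Finset.mem_filter] at hw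
      refine Finset.mem_erase.mpr ⟨?_, by simp [hw.2]⟩
      rintro rfl
      exact hvT hw.1
    have hcard := Finset.card_le_card hsub
    have hv : v ∈ Finset.univ.filter (fun w => ¬ G.Adj v w) := by simp
    have herase := Finset.card_erase_add_one hv
    have htot := Finset.card_filter_add_card_filter_not
      (s := (Finset.univ : Finset (Fin N))) (p := fun w => G.Adj v w)
    have huniv : (Finset.univ : Finset (Fin N)).card = N := by simp
    omega
  -- the third colour
  obtain ⟨k, hki, hkj, hk3⟩ := third_colour i j hij
  -- membership facts
  have hAmem : ∀ a ∈ A, (colourGraph G c i).connectedComponentMk a = Ki ∧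
      ¬ (colourGraph G c j).connectedComponentMk a = Kj := by
    intro a ha
    rw [hAdef, Finset.mem_sdiff, Set.mem_toFinset, Set.mem_toFinset] at ha
    exact ha
  have hBmem : ∀ b ∈ B, (colourGraph G c j).connectedComponentMk b = Kj ∧
      ¬ (colourGraph G c i).connectedComponentMk b = Ki := by
    intro b hb
    rw [hBdef, Finset.mem_sdiff, Set.mem_toFinset, Set.mem_toFinset] at hb
    exact hb
  -- A, B disjoint facts
  have hAnotB : ∀ a ∈ A, a ∉ B := by
    intro a ha hb
    exact (hBmem a hb).2 (hAmem a ha).1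
  have hBnotA : ∀ b ∈ B, b ∉ A := by
    intro b hb ha
    exact (hBmem b hb).2 (hAmem b ha).1
  -- all A-B edges are colour k
  have hedge : ∀ a ∈ A, ∀ b ∈ B, G.Adj a b → (colourGraph G c k).Adj a b := by
    intro a ha b hb hab
    refine ⟨hab, ?_⟩
    rcases hk3 (c s(a, b)) with h | h | h
    · exfalso
      have hadj : (colourGraph G c i).Adj a b := ⟨hab, h⟩
      have : (colourGraph G c i).connectedComponentMk b = Ki := by
        rw [← (hAmem a ha).1]
        exact (ConnectedComponent.sound hadj.symm.reachable)
      exact (hBmem b hb).2 this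
    · exfalso
      have hadj : (colourGraph G c j).Adj a b := ⟨hab, h⟩
      have : (colourGraph G c j).connectedComponentMk a = Kj := by
        rw [← (hBmem b hb).1]
        exact (ConnectedComponent.sound hadj.reachable)
      exact (hAmem a ha).2 this
    · exact h
  -- neighbourhoods in B
  set r := fun a : Fin N => B.filter (fun b => G.Adj a b) with hrdef
  have hrcard : ∀ a ∈ A, B.card + 1 ≤ (r a).card + q := by
    intro a ha
    have hnb := hnon a B (hAnotB a ha)
    have htot := Finset.card_filter_add_card_filter_not
      (s := B) (p := fun b => G.Adj a b)
    have hre : r a = B.filter (fun b => G.Adj a b) := rfl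
    rw [hre]
    omega
  -- Hall condition
  have hall : ∀ s : Finset {x // x ∈ A}, s.card ≤ (s.biUnion (fun a => r ↑a)).card := by
    intro s
    rcases Finset.eq_empty_or_nonempty s with rfl | ⟨a, ha⟩
    · simp
    by_cases hcase : s.card + q ≤ B.card + 1
    · have hsub : r ↑a ⊆ s.biUnion (fun a => r ↑a) := Finset.subset_biUnion_of_mem (s := s) (fun a => r ↑a) ha
      have h1 := Finset.card_le_card hsub
      have h2 := hrcard ↑a a.2
      omega
    · push_neg at hcase
      have hsubA : s.image (fun x : {x // x ∈ A} => (x : Fin N)) ⊆ A := by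
        intro x hx
        obtain ⟨y, _, rfl⟩ := Finset.mem_image.mp hx
        exact y.2
      have hscard : (s.image (fun x : {x // x ∈ A} => (x : Fin N))).card = s.card :=
        Finset.card_image_of_injective _ Subtype.val_injective
      have hBsub : B ⊆ s.biUnion (fun a => r ↑a) := by
        intro b hb
        have hbA : b ∉ s.image (fun x : {x // x ∈ A} => (x : Fin N)) := by
          intro h
          exact hBnotA b hb (hsubA h)
        have hnb := hnon b _ hbA
        have htot := Finset.card_filter_add_card_filter_not
          (s := s.image (fun x : {x // x ∈ A} => (x : Fin N))) (p := fun w => G.Adj b w)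
        obtain ⟨a', ha'⟩ : ((s.image (fun x : {x // x ∈ A} => (x : Fin N))).filter
            (fun w => G.Adj b w)).Nonempty := by
          rw [← Finset.card_pos]
          omega
        rw [Finset.mem_filter, Finset.mem_image] at ha'
        obtain ⟨⟨a'', ha''s, rfl⟩, hadj⟩ := ha'
        refine Finset.mem_biUnion.mpr ⟨a'', ha''s, ?_⟩
        rw [hrdef]
        exact Finset.mem_filter.mpr ⟨hb, hadj.symm⟩
      have h2 := Finset.card_le_card hBsub
      have h3 : s.card ≤ A.card := by
        rw [← hscard]
        exact Finset.card_le_card hsubA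
      omega
  obtain ⟨f, hfinj, hfmem⟩ :=
    (Finset.all_card_le_biUnion_card_iff_exists_injective (fun a : {x // x ∈ A} => r ↑a)).mp hall
  have hfB : ∀ a : {x // x ∈ A}, f a ∈ B := fun a => (Finset.mem_filter.mp (hfmem a)).1
  have hfadj : ∀ a : {x // x ∈ A}, G.Adj ↑a (f a) := fun a => (Finset.mem_filter.mp (hfmem a)).2
  -- a base point
  obtain ⟨a₀, ha₀⟩ : A.Nonempty := by
    rw [← Finset.card_pos]
    omega
  -- reachability in colour k
  have hreach : ∀ a ∈ A, (colourGraph G c k).Reachable a₀ a := by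
    intro a ha
    have h₀ := hrcard a₀ ha₀
    have h₁ := hrcard a ha
    obtain ⟨b, hb⟩ : (r a₀ ∩ r a).Nonempty := by
      rw [← Finset.card_pos]
      have hu := Finset.card_union_add_card_inter (r a₀) (r a)
      have hub : (r a₀ ∪ r a).card ≤ B.card := by
        apply Finset.card_le_card
        apply Finset.union_subset <;> exact Finset.filter_subset _ _
      omega
    rw [Finset.mem_inter] at hb
    have hb0 := Finset.mem_filter.mp hb.1
    have hb1 := Finset.mem_filter.mp hb.2
    exact ((hedge a₀ ha₀ b hb0.1 hb0.2).reachable).trans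
      ((hedge a ha b hb1.1 hb1.2).reachable.symm)
  set K := (colourGraph G c k).connectedComponentMk a₀ with hKdef
  -- the matching subgraph
  set Mverts : Finset (Fin N) := A ∪ A.attach.image (fun a => f a) with hMverts
  have himB : ∀ x ∈ A.attach.image (fun a => f a), x ∈ B := by
    intro x hx
    obtain ⟨a, _, rfl⟩ := Finset.mem_image.mp hx
    exact hfB a
  let M : (colourGraph G c k).Subgraph :=
    { verts := ↑Mverts
      Adj := fun u v => ∃ a : {x // x ∈ A}, (u = ↑a ∧ v = f a) ∨ (u = f a ∧ v = ↑a)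
      adj_sub := by
        rintro u v ⟨a, ⟨rfl, rfl⟩ | ⟨rfl, rfl⟩⟩
        · exact hedge ↑a a.2 (f a) (hfB a) (hfadj a)
        · exact (hedge ↑a a.2 (f a) (hfB a) (hfadj a)).symm
      edge_vert := by
        rintro u v ⟨a, ⟨rfl, rfl⟩ | ⟨rfl, rfl⟩⟩
        · exact Finset.mem_coe.mpr (Finset.mem_union_left _ a.2)
        · exact Finset.mem_coe.mpr (Finset.mem_union_right _
            (Finset.mem_image.mpr ⟨a, Finset.mem_attach _ _, rfl⟩))
      symm := by
        refine ⟨?_⟩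
        rintro u v ⟨a, ⟨rfl, rfl⟩ | ⟨rfl, rfl⟩⟩
        · exact ⟨a, Or.inr ⟨rfl, rfl⟩⟩
        · exact ⟨a, Or.inl ⟨rfl, rfl⟩⟩ }
  have hmatch : M.IsMatching := by
    intro v hv
    rcases Finset.mem_union.mp (Finset.mem_coe.mp hv) with hvA | hvI
    · refine ⟨f ⟨v, hvA⟩, ⟨⟨v, hvA⟩, Or.inl ⟨rfl, rfl⟩⟩, ?_⟩
      rintro w ⟨a, ⟨hva, rfl⟩ | ⟨hva, rfl⟩⟩
      · have : a = ⟨v, hvA⟩ := Subtype.ext hva.symm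
        rw [this]
      · exfalso
        exact hAnotB v hvA (hva ▸ hfB a)
    · obtain ⟨a₁, -, ha₁⟩ := Finset.mem_image.mp hvI
      refine ⟨↑a₁, ⟨a₁, Or.inr ⟨ha₁.symm, rfl⟩⟩, ?_⟩
      rintro w ⟨a, ⟨hva, rfl⟩ | ⟨hva, rfl⟩⟩
      · exfalso
        have hvB : v ∈ B := ha₁ ▸ hfB a₁
        exact hAnotB ↑a a.2 (hva ▸ hvB)
      · have : a = a₁ := hfinj (by rw [← hva, ha₁])
        rw [this]
  have hsupp : M.verts ⊆ K.supp := by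
    intro v hv
    rcases Finset.mem_union.mp (Finset.mem_coe.mp hv) with hvA | hvI
    · exact (ConnectedComponent.mem_supp_iff _ _).mpr
        (ConnectedComponent.eq.mpr (hreach v hvA).symm)
    · obtain ⟨a₁, -, ha₁⟩ := Finset.mem_image.mp hvI
      refine (ConnectedComponent.mem_supp_iff _ _).mpr (ConnectedComponent.eq.mpr ?_)
      have : (colourGraph G c k).Reachable a₀ v := by
        rw [← ha₁]
        exact (hreach ↑a₁ a₁.2).trans (hedge ↑a₁ a₁.2 (f a₁) (hfB a₁) (hfadj a₁)).reachable
      exact this.symm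
  have hMcard : Mverts.card = 2 * A.card := by
    rw [hMverts, Finset.card_union_of_disjoint, Finset.card_image_of_injective _ hfinj,
      Finset.card_attach]
    · ring
    · rw [Finset.disjoint_right]
      intro x hx
      exact hBnotA x (himB x hx)
  have hvcard : (N : ℝ) / 2 ≤ M.verts.ncard := by
    have : M.verts.ncard = Mverts.card := Set.ncard_coe_finset _
    rw [this, hMcard]
    have : (N : ℝ) ≤ 4 * A.card := by exact_mod_cast hA4
    push_cast
    linarith
  exact hno ⟨k, M, K, hmatch, hsupp, hvcard⟩


/-- Let G be a graph on N vertices with minimum degree at least N − N/8, 3-edge-coloured.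
If no monochromatic component contains a matching saturating at least N/2 vertices, then
any two monochromatic components of different colours, each with at least N/2 vertices,
share more than N/4 vertices. -/
theorem stmt8 (N : ℕ) (G : SimpleGraph (Fin N))
    (hdeg : ∀ v, (N : ℝ) - (N : ℝ) / 8 ≤ (G.neighborSet v).ncard)
    (c : Sym2 (Fin N) → Fin 3)
    (hno : ¬ ∃ (i : Fin 3) (M : (colourGraph G c i).Subgraph)
        (K : (colourGraph G c i).ConnectedComponent),
        M.IsMatching ∧ M.verts ⊆ K.supp ∧ (N : ℝ) / 2 ≤ M.verts.ncard) :
    ∀ (i j : Fin 3), i ≠ j →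
      ∀ (Ki : (colourGraph G c i).ConnectedComponent)
        (Kj : (colourGraph G c j).ConnectedComponent),
        (N : ℝ) / 2 ≤ Ki.supp.ncard → (N : ℝ) / 2 ≤ Kj.supp.ncard →
        (N : ℝ) / 4 < ((Ki.supp ∩ Kj.supp).ncard : ℝ) := by

  intro i j hij Ki Kj hKi hKj
  by_contra h
  push_neg at h
  rcases le_total ((Ki.supp \ Kj.supp).ncard) ((Kj.supp \ Ki.supp).ncard) with hle | hle
  · exact aux8 N G hdeg c hno i j hij Ki Kj hKi hKj h hle
  · exact aux8 N G hdeg c hno j i hij.symm Kj Ki hKj hKi (by rwa [Set.inter_comm]) hle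
end

section
/- Let Ĥ = Ĥ(m₀; m₁, m₂, m₃) be the graph whose vertex set is partitioned into disjoint sets Z₀, Z₁, Z₂, Z₃ of sizes m₀, m₁, m₂, m₃ respectively, whose edges are all pairs of vertices lying in two different parts together with all pairs of vertices inside Z₀. Let G be a b-dense subgraph of Ĥ, let m̂ = m₀ + m₁ + m₂ + m₃, and suppose m₁, m₂, m₃ ≤ 2b + 2√m̂ and b ≥ 6√m̂. Then G contains a matching saturating at least min{m̂, m₀ + m̂ − 2b} − 5√m̂ vertices. If, furthermore, m₀ > 0 and min{m̂, m₀ + m̂ − 2b} ≥ 2b + 3√m̂, then G is connected. -/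
open SimpleGraph

/-- The graph Ĥ on a vertex set partitioned into parts `Z 0, Z 1, Z 2, Z 3`: its edges are
all pairs of vertices lying in two different parts together with all pairs inside `Z 0`. -/
def hatH {V : Type*} (Z : Fin 4 → Set V) : SimpleGraph V where
  Adj u v := u ≠ v ∧ ((u ∈ Z 0 ∧ v ∈ Z 0) ∨ ∃ i j : Fin 4, i ≠ j ∧ u ∈ Z i ∧ v ∈ Z j)
  symm := ⟨by
    rintro u v ⟨hne, h⟩
    refine ⟨hne.symm, ?_⟩
    rcases h with ⟨h1, h2⟩ | ⟨i, j, hij, hi, hj⟩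
    · exact Or.inl ⟨h2, h1⟩
    · exact Or.inr ⟨j, i, hij.symm, hj, hi⟩⟩
  loopless := ⟨fun v h => h.1 rfl⟩

namespace Stmt10Aux
set_option linter.unusedSectionVars false
open Set

section Matchings
variable {V : Type*} [Fintype V] {G : SimpleGraph V} {M : G.Subgraph}

lemma my_ncard_exchange {a b : V} {s : Set V} (ha : a ∉ s) (hb : b ∈ s) :
    (insert a (s \ {b})).ncard = s.ncard := by
  rw [Set.ncard_def, Set.ncard_def, Set.encard_exchange ha hb]

lemma bot_isMatching (G : SimpleGraph V) : (⊥ : G.Subgraph).IsMatching := by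
  intro v hv
  simp only [Subgraph.verts_bot, Set.mem_empty_iff_false] at hv

lemma exists_max_matching (G : SimpleGraph V) :
    ∃ M : G.Subgraph, M.IsMatching ∧
      ∀ N : G.Subgraph, N.IsMatching → N.verts.ncard ≤ M.verts.ncard := by
  set S : Set ℕ := {k | ∃ N : G.Subgraph, N.IsMatching ∧ N.verts.ncard = k} with hS
  have h0 : 0 ∈ S := ⟨⊥, bot_isMatching G, by simp [Subgraph.verts_bot]⟩
  have hbdd : BddAbove S := by
    refine ⟨Fintype.card V, ?_⟩
    rintro k ⟨N, -, rfl⟩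
    have := Set.ncard_le_ncard (Set.subset_univ N.verts) (Set.finite_univ)
    simpa [Set.ncard_univ, Nat.card_eq_fintype_card] using this
  obtain ⟨M, hM, hcard⟩ := Nat.sSup_mem ⟨0, h0⟩ hbdd
  exact ⟨M, hM, fun N hN => hcard ▸ le_csSup hbdd ⟨N, hN, rfl⟩⟩

lemma isMatching_deleteVerts_pair (hM : M.IsMatching)
    {x y : V} (hxy : M.Adj x y) : (M.deleteVerts {x, y}).IsMatching := by
  intro v hv
  rw [Subgraph.deleteVerts_verts, Set.mem_diff] at hv
  obtain ⟨hv1, hv2⟩ := hv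
  obtain ⟨w, hw1, hw2⟩ := hM hv1
  have hwxy : w ∉ ({x, y} : Set V) := by
    rintro (rfl | rfl)
    · have h1 : v = y := (hM hxy.fst_mem).unique hw1.symm hxy
      exact hv2 (by simp [h1])
    · have h1 : v = x := (hM hxy.snd_mem).unique hw1.symm hxy.symm
      exact hv2 (by simp [h1])
  refine ⟨w, Subgraph.deleteVerts_adj.mpr ⟨hv1, hv2, hw1.snd_mem, hwxy, hw1⟩, ?_⟩
  intro y' hy'
  exact hw2 y' (Subgraph.deleteVerts_adj.mp hy').2.2.2.2

lemma matching_extend (hM : M.IsMatching)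
    {a c : V} (ha : a ∉ M.verts) (hc : c ∉ M.verts) (hadj : G.Adj a c) :
    ∃ M' : G.Subgraph, M'.IsMatching ∧ M'.verts = M.verts ∪ {a, c} ∧ M ≤ M' := by
  refine ⟨M ⊔ G.subgraphOfAdj hadj, ?_, ?_, le_sup_left⟩
  · refine hM.sup (Subgraph.IsMatching.subgraphOfAdj hadj) ?_
    rw [hM.support_eq_verts, (Subgraph.IsMatching.subgraphOfAdj hadj).support_eq_verts,
      subgraphOfAdj_verts]
    rw [Set.disjoint_right]
    rintro z (rfl | rfl) <;> simp_all
  · rw [Subgraph.verts_sup, subgraphOfAdj_verts]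

lemma matching_exchange (hM : M.IsMatching)
    {x y a : V} (hxy : M.Adj x y) (ha : a ∉ M.verts) (hadj : G.Adj a x) :
    ∃ M' : G.Subgraph, M'.IsMatching ∧ M'.verts = insert a (M.verts \ {y}) ∧
      ∀ p q, M.Adj p q → p ∉ ({x, y} : Set V) → q ∉ ({x, y} : Set V) → M'.Adj p q := by
  have hd := isMatching_deleteVerts_pair hM hxy
  have hxv : x ∉ (M.deleteVerts {x, y}).verts := by
    rw [Subgraph.deleteVerts_verts]; simp
  have hav : a ∉ (M.deleteVerts {x, y}).verts := by
    rw [Subgraph.deleteVerts_verts]; exact fun h => ha h.1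
  obtain ⟨M', hM', hv, hle⟩ := matching_extend hd hav hxv hadj
  refine ⟨M', hM', ?_, ?_⟩
  · rw [hv, Subgraph.deleteVerts_verts]
    have hxm : x ∈ M.verts := hxy.fst_mem
    have hxy' : x ≠ y := (M.adj_sub hxy).ne
    ext v
    simp only [Set.mem_union, Set.mem_diff, Set.mem_insert_iff, Set.mem_singleton_iff]
    constructor
    · rintro (⟨hv1, hv2⟩ | (rfl | rfl))
      · exact Or.inr ⟨hv1, fun h => hv2 (by simp [h])⟩
      · exact Or.inl rfl
      · exact Or.inr ⟨hxm, hxy'⟩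
    · rintro (rfl | ⟨hv1, hv2⟩)
      · exact Or.inr (Or.inl rfl)
      · by_cases hvx : v = x
        · exact Or.inr (Or.inr hvx)
        · exact Or.inl ⟨hv1, by rintro (h | h) <;> simp_all⟩
  · intro p q hpq hp hq
    exact hle.2 (Subgraph.deleteVerts_adj.mpr ⟨hpq.fst_mem, hp, hpq.snd_mem, hq, hpq⟩)

lemma matching_augment (hM : M.IsMatching)
    {x y a c : V} (hxy : M.Adj x y) (ha : a ∉ M.verts) (hc : c ∉ M.verts) (hac : a ≠ c)
    (h1 : G.Adj a x) (h2 : G.Adj c y) :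
    ∃ M' : G.Subgraph, M'.IsMatching ∧ M'.verts = M.verts ∪ {a, c} := by
  obtain ⟨M1, hM1, hv1, -⟩ := matching_exchange hM hxy ha h1
  have hyM : y ∈ M.verts := hxy.snd_mem
  have hy1 : y ∉ M1.verts := by
    rw [hv1]
    rintro (rfl | ⟨-, h⟩)
    · exact ha hyM
    · exact h rfl
  have hc1 : c ∉ M1.verts := by
    rw [hv1]
    rintro (rfl | ⟨h, -⟩)
    · exact hac rfl
    · exact hc h
  obtain ⟨M2, hM2, hv2, -⟩ := matching_extend hM1 hc1 hy1 h2
  refine ⟨M2, hM2, ?_⟩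
  rw [hv2, hv1]
  ext v
  simp only [Set.mem_union, Set.mem_insert_iff, Set.mem_diff, Set.mem_singleton_iff]
  constructor
  · rintro ((rfl | ⟨h1', h2'⟩) | (rfl | rfl))
    · exact Or.inr (Or.inl rfl)
    · exact Or.inl h1'
    · exact Or.inr (Or.inr rfl)
    · exact Or.inl hyM
  · rintro (hv | (rfl | rfl))
    · by_cases hvy : v = y
      · exact Or.inr (Or.inr hvy)
      · exact Or.inl (Or.inr ⟨hv, hvy⟩)
    · exact Or.inl (Or.inl rfl)
    · exact Or.inr (Or.inl rfl)

lemma ncard_union_pair {s : Set V} {a c : V} (ha : a ∉ s) (hc : c ∉ s) (hac : a ≠ c) :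
    (s ∪ {a, c}).ncard = s.ncard + 2 := by
  have h1 : s ∪ {a, c} = insert a (insert c s) := by
    ext w
    simp only [Set.mem_union, Set.mem_insert_iff, Set.mem_singleton_iff]
    tauto
  rw [h1, Set.ncard_insert_of_notMem (by simp [ha]; exact hac),
    Set.ncard_insert_of_notMem hc]

lemma no_exposed_edge (hM : M.IsMatching)
    (hmax : ∀ N : G.Subgraph, N.IsMatching → N.verts.ncard ≤ M.verts.ncard)
    {a c : V} (ha : a ∉ M.verts) (hc : c ∉ M.verts) : ¬ G.Adj a c := by
  intro hadj
  obtain ⟨M', hM', hv, -⟩ := matching_extend hM ha hc hadj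
  have h2 : M'.verts.ncard = M.verts.ncard + 2 := by
    rw [hv]; exact ncard_union_pair ha hc hadj.ne
  have := hmax M' hM'
  omega

lemma no_augment (hM : M.IsMatching)
    (hmax : ∀ N : G.Subgraph, N.IsMatching → N.verts.ncard ≤ M.verts.ncard)
    {u₁ u₂ x y : V} (h1 : u₁ ∉ M.verts) (h2 : u₂ ∉ M.verts) (hne : u₁ ≠ u₂)
    (hxy : M.Adj x y) (ha1 : G.Adj u₁ x) (ha2 : G.Adj u₂ y) : False := by
  obtain ⟨M', hM', hv⟩ := matching_augment hM hxy h1 h2 hne ha1 ha2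
  have h3 : M'.verts.ncard = M.verts.ncard + 2 := by
    rw [hv]; exact ncard_union_pair h1 h2 hne
  have := hmax M' hM'
  omega

lemma key_bound (hM : M.IsMatching)
    (hmax : ∀ N : G.Subgraph, N.IsMatching → N.verts.ncard ≤ M.verts.ncard)
    {u₁ u₂ : V} (h1 : u₁ ∉ M.verts) (h2 : u₂ ∉ M.verts) (hne : u₁ ≠ u₂) :
    (G.neighborSet u₁).ncard + (G.neighborSet u₂).ncard ≤ M.verts.ncard := by
  classical
  set N₁ := G.neighborSet u₁ with hN₁
  set N₂ := G.neighborSet u₂ with hN₂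
  have hsub1 : N₁ ⊆ M.verts := fun w hw => by
    by_contra hwm; exact no_exposed_edge hM hmax h1 hwm hw
  have hsub2 : N₂ ⊆ M.verts := fun w hw => by
    by_contra hwm; exact no_exposed_edge hM hmax h2 hwm hw
  have hex : ∀ v, ∃ w, v ∈ M.verts → M.Adj v w := by
    intro v
    by_cases hv : v ∈ M.verts
    · obtain ⟨w, hw⟩ := (hM hv).exists
      exact ⟨w, fun _ => hw⟩
    · exact ⟨u₁, fun h => absurd h hv⟩
  choose pa hpa using hex
  have huniq : ∀ v w, M.Adj v w → w = pa v := fun v w h =>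
    (hM h.fst_mem).unique h (hpa v h.fst_mem)
  have himg : ∀ v ∈ N₁ ∩ N₂, pa v ∈ M.verts ∧ pa v ∉ N₁ ∪ N₂ := by
    rintro v ⟨hv1, hv2⟩
    have hvm : v ∈ M.verts := hsub1 hv1
    have hadj : M.Adj v (pa v) := hpa v hvm
    refine ⟨hadj.snd_mem, ?_⟩
    rintro (hp1 | hp2)
    · exact no_augment hM hmax h1 h2 hne hadj.symm hp1 hv2
    · exact no_augment hM hmax h1 h2 hne hadj hv1 hp2
  have hinj : Set.InjOn pa (N₁ ∩ N₂) := by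
    rintro v ⟨hv1, -⟩ w ⟨hw1, -⟩ heq
    have hv : M.Adj v (pa v) := hpa v (hsub1 hv1)
    have hw : M.Adj w (pa w) := hpa w (hsub1 hw1)
    have h1' : v = pa (pa v) := huniq (pa v) v hv.symm
    have h2' : w = pa (pa w) := huniq (pa w) w hw.symm
    rw [h1', h2', heq]
  have hdisj2 : Disjoint (pa '' (N₁ ∩ N₂)) (N₁ ∪ N₂) := by
    rw [Set.disjoint_left]
    rintro w ⟨v, hv, rfl⟩ hw
    exact (himg v hv).2 hw
  have hsubU : pa '' (N₁ ∩ N₂) ∪ (N₁ ∪ N₂) ⊆ M.verts := by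
    rintro w (⟨v, hv, rfl⟩ | (hw | hw))
    · exact (himg v hv).1
    · exact hsub1 hw
    · exact hsub2 hw
  calc N₁.ncard + N₂.ncard
      = (N₁ ∪ N₂).ncard + (N₁ ∩ N₂).ncard := (Set.ncard_union_add_ncard_inter N₁ N₂).symm
    _ = (N₁ ∪ N₂).ncard + (pa '' (N₁ ∩ N₂)).ncard := by rw [Set.ncard_image_of_injOn hinj]
    _ = (pa '' (N₁ ∩ N₂) ∪ (N₁ ∪ N₂)).ncard := by
        rw [Set.ncard_union_eq hdisj2]; ring
    _ ≤ M.verts.ncard := Set.ncard_le_ncard hsubU (Set.toFinite _)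

end Matchings

section HatH
variable {V : Type*} [Fintype V] {Z : Fin 4 → Set V}

lemma part_eq (hdisj : ∀ i j : Fin 4, i ≠ j → Disjoint (Z i) (Z j))
    {v : V} {i j : Fin 4} (hi : v ∈ Z i) (hj : v ∈ Z j) : i = j := by
  by_contra h
  exact Set.disjoint_left.mp (hdisj i j h) hi hj

lemma exists_part (hcov : (⋃ i, Z i) = Set.univ) (w : V) : ∃ i, w ∈ Z i := by
  have : w ∈ ⋃ i, Z i := hcov ▸ Set.mem_univ w
  exact Set.mem_iUnion.mp this

lemma hatH_adj_of_ne_part (hdisj : ∀ i j : Fin 4, i ≠ j → Disjoint (Z i) (Z j))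
    {u v : V} {i j : Fin 4} (hij : i ≠ j) (hu : u ∈ Z i) (hv : v ∈ Z j) :
    (hatH Z).Adj u v :=
  ⟨fun h => Set.disjoint_left.mp (hdisj i j hij) hu (h ▸ hv), Or.inr ⟨i, j, hij, hu, hv⟩⟩

lemma hatH_adj_zero {u v : V} (hu : u ∈ Z 0) (hv : v ∈ Z 0) (hne : u ≠ v) :
    (hatH Z).Adj u v := ⟨hne, Or.inl ⟨hu, hv⟩⟩

lemma hatH_nbhd_part (hcov : (⋃ i, Z i) = Set.univ)
    (hdisj : ∀ i j : Fin 4, i ≠ j → Disjoint (Z i) (Z j))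
    {i : Fin 4} (hi0 : i ≠ 0) {v : V} (hv : v ∈ Z i) :
    (hatH Z).neighborSet v = (Z i)ᶜ := by
  ext w
  simp only [mem_neighborSet, Set.mem_compl_iff]
  constructor
  · rintro ⟨hne, (⟨h1, h2⟩ | ⟨a, c, hac, ha, hc⟩)⟩
    · exact (hi0 (part_eq hdisj hv h1)).elim
    · intro hw
      have hai : a = i := part_eq hdisj ha hv
      have hci : c = i := part_eq hdisj hc hw
      exact hac (hai.trans hci.symm)
  · intro hw
    obtain ⟨j, hj⟩ := exists_part hcov w
    have hij : i ≠ j := fun h => hw (h ▸ hj)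
    exact hatH_adj_of_ne_part hdisj hij hv hj

lemma hatH_nbhd_zero (hcov : (⋃ i, Z i) = Set.univ)
    (hdisj : ∀ i j : Fin 4, i ≠ j → Disjoint (Z i) (Z j))
    {v : V} (hv : v ∈ Z 0) :
    (hatH Z).neighborSet v = {v}ᶜ := by
  ext w
  simp only [mem_neighborSet, Set.mem_compl_iff, Set.mem_singleton_iff]
  constructor
  · intro h hwv
    exact h.ne hwv.symm
  · intro hne
    obtain ⟨j, hj⟩ := exists_part hcov w
    by_cases hj0 : j = 0
    · exact hatH_adj_zero hv (hj0 ▸ hj) (Ne.symm hne)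
    · exact hatH_adj_of_ne_part hdisj (Ne.symm hj0) hv hj

lemma budget {G : SimpleGraph V} {b : ℕ}
    (hsub : G ≤ hatH Z)
    (hdense : ∀ v : V, ((hatH Z).neighborSet v).ncard < (G.neighborSet v).ncard + b)
    (v : V) {S : Set V} (h1 : S ⊆ (hatH Z).neighborSet v) (h2 : ∀ w ∈ S, ¬ G.Adj v w) :
    S.ncard < b := by
  have hdisjS : Disjoint S (G.neighborSet v) := Set.disjoint_left.mpr fun w hw hw' => h2 w hw hw'
  have hsubS : S ∪ G.neighborSet v ⊆ (hatH Z).neighborSet v :=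
    Set.union_subset h1 (fun w hw => hsub hw)
  have hle := Set.ncard_le_ncard hsubS (Set.toFinite _)
  rw [Set.ncard_union_eq hdisjS] at hle
  have hd := hdense v
  omega

lemma ncard_univ_eq (hcov : (⋃ i, Z i) = Set.univ)
    (hdisj : ∀ i j : Fin 4, i ≠ j → Disjoint (Z i) (Z j)) :
    (Set.univ : Set V).ncard = (Z 0).ncard + (Z 1).ncard + (Z 2).ncard + (Z 3).ncard := by
  have huniv : (Set.univ : Set V) = ((Z 0 ∪ Z 1) ∪ (Z 2 ∪ Z 3)) := by
    rw [← hcov]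
    ext w
    simp only [Set.mem_iUnion, Set.mem_union]
    constructor
    · rintro ⟨i, hi⟩; fin_cases i <;> tauto
    · rintro ((h | h) | (h | h)) <;> exact ⟨_, h⟩
  have d01 : Disjoint (Z 0) (Z 1) := hdisj 0 1 (by decide)
  have d23 : Disjoint (Z 2) (Z 3) := hdisj 2 3 (by decide)
  have dbig : Disjoint (Z 0 ∪ Z 1) (Z 2 ∪ Z 3) := by
    rw [Set.disjoint_union_left]
    constructor <;> rw [Set.disjoint_union_right] <;>
      exact ⟨hdisj _ _ (by decide), hdisj _ _ (by decide)⟩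
  rw [huniv, Set.ncard_union_eq dbig, Set.ncard_union_eq d01, Set.ncard_union_eq d23]
  ring

lemma pair_le (hdisj : ∀ i j : Fin 4, i ≠ j → Disjoint (Z i) (Z j))
    {i j : Fin 4} (hij : i ≠ j) :
    (Z i).ncard + (Z j).ncard ≤ (Set.univ : Set V).ncard := by
  calc (Z i).ncard + (Z j).ncard = (Z i ∪ Z j).ncard := (Set.ncard_union_eq (hdisj i j hij)).symm
    _ ≤ _ := Set.ncard_le_ncard (Set.subset_univ _) (Set.toFinite _)

lemma triple_le (hdisj : ∀ i j : Fin 4, i ≠ j → Disjoint (Z i) (Z j))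
    {i j : Fin 4} (h0i : (0 : Fin 4) ≠ i) (h0j : (0 : Fin 4) ≠ j) (hij : i ≠ j) :
    (Z 0).ncard + (Z i).ncard + (Z j).ncard ≤ (Set.univ : Set V).ncard := by
  have d1 : Disjoint (Z 0) (Z i) := hdisj _ _ h0i
  have d2 : Disjoint (Z 0 ∪ Z i) (Z j) := by
    rw [Set.disjoint_union_left]
    exact ⟨hdisj _ _ h0j, hdisj _ _ hij⟩
  calc (Z 0).ncard + (Z i).ncard + (Z j).ncard
      = ((Z 0 ∪ Z i) ∪ Z j).ncard := by
        rw [Set.ncard_union_eq d2, Set.ncard_union_eq d1]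
    _ ≤ _ := Set.ncard_le_ncard (Set.subset_univ _) (Set.toFinite _)

end HatH
end Stmt10Aux

namespace Stmt10Aux
open Set

lemma matching_half {V : Type*} [Fintype V] (Z : Fin 4 → Set V) (m : Fin 4 → ℕ) (b : ℕ)
    (hcov : (⋃ i, Z i) = Set.univ)
    (hdisj : ∀ i j : Fin 4, i ≠ j → Disjoint (Z i) (Z j))
    (hsize : ∀ i, (Z i).ncard = m i)
    (G : SimpleGraph V) (hsub : G ≤ hatH Z)
    (hdense : ∀ v : V, ((hatH Z).neighborSet v).ncard < (G.neighborSet v).ncard + b)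
    (mhat : ℕ) (hmhat : mhat = m 0 + m 1 + m 2 + m 3)
    (hm : ∀ i : Fin 4, i ≠ 0 → (m i : ℝ) ≤ 2 * b + 2 * Real.sqrt mhat) :
    ∃ M : G.Subgraph, M.IsMatching ∧
        min (mhat : ℝ) ((m 0 : ℝ) + mhat - 2 * b) - 5 * Real.sqrt mhat ≤ M.verts.ncard := by
  classical
  set s : ℝ := Real.sqrt mhat with hsdef
  have hs0 : 0 ≤ s := Real.sqrt_nonneg _
  by_cases htriv : min (mhat : ℝ) ((m 0 : ℝ) + mhat - 2 * b) ≤ 5 * s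
  · refine ⟨⊥, bot_isMatching G, ?_⟩
    rw [Subgraph.verts_bot]
    simp only [Set.ncard_empty, Nat.cast_zero]
    linarith
  push_neg at htriv
  have hnV : Nat.card V = mhat := by
    rw [← Set.ncard_univ, ncard_univ_eq hcov hdisj, hsize, hsize, hsize, hsize, hmhat]
  have hm0n : m 0 ≤ mhat := by
    rw [← hsize 0, ← hnV, ← Set.ncard_univ]
    exact Set.ncard_le_ncard (Set.subset_univ _) (Set.toFinite _)
  have hpairn : ∀ i : Fin 4, 0 ≠ i → m 0 + m i ≤ mhat := by
    intro i h
    rw [← hsize 0, ← hsize i, ← hnV, ← Set.ncard_univ]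
    exact pair_le hdisj h
  have htripn : ∀ i j : Fin 4, 0 ≠ i → 0 ≠ j → i ≠ j → m 0 + m i + m j ≤ mhat := by
    intro i j h1 h2 h3
    rw [← hsize 0, ← hsize i, ← hsize j, ← hnV, ← Set.ncard_univ]
    exact triple_le hdisj h1 h2 h3
  have hsq : s * s = (mhat : ℝ) := Real.mul_self_sqrt (by positivity)
  have h5n : 5 * s < (mhat : ℝ) := lt_of_lt_of_le htriv (min_le_left _ _)
  have hs5 : 5 < s := by
    by_contra h
    push_neg at h
    have h2 : s * s ≤ 5 * s := mul_le_mul_of_nonneg_right h hs0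
    rw [hsq] at h2
    linarith
  obtain ⟨M, hM, hmax⟩ := exists_max_matching G
  set U : Set V := M.vertsᶜ with hUdef
  have hMu : M.verts.ncard + U.ncard = mhat := by
    rw [hUdef, ← hnV]
    exact Set.ncard_add_ncard_compl M.verts
  suffices hfin : (U.ncard : ℝ) ≤ max 0 ((2 * b : ℝ) - m 0) + 5 * s by
    refine ⟨M, hM, ?_⟩
    have hMn : (M.verts.ncard : ℝ) + U.ncard = mhat := by exact_mod_cast hMu
    have hminle : min (mhat : ℝ) ((m 0 : ℝ) + mhat - 2 * b)
        ≤ (mhat : ℝ) - max 0 ((2 * b : ℝ) - m 0) := by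
      rcases le_total ((m 0 : ℝ)) (2 * b) with h | h
      · rw [max_eq_right (by linarith)]
        have := min_le_right (mhat : ℝ) ((m 0 : ℝ) + mhat - 2 * b)
        linarith
      · rw [max_eq_left (by linarith)]
        have := min_le_left (mhat : ℝ) ((m 0 : ℝ) + mhat - 2 * b)
        linarith
    linarith
  by_contra hu
  push_neg at hu
  have hu1 : (2 * b : ℝ) - m 0 + 5 * s < U.ncard := by
    have := le_max_right (0 : ℝ) ((2 * b : ℝ) - m 0)
    linarith
  have hu2 : 5 * s < (U.ncard : ℝ) := by
    have := le_max_left (0 : ℝ) ((2 * b : ℝ) - m 0)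
    linarith
  have hu2' : 1 < U.ncard := by
    have h1 : (1 : ℝ) < U.ncard := by nlinarith
    exact_mod_cast h1
  have hpick : ∀ x : V, ∃ v ∈ U, v ≠ x := by
    intro x
    obtain ⟨a, ha, c, hc, hac⟩ := (Set.one_lt_ncard (Set.toFinite _)).mp hu2'
    by_cases hax : a = x
    · exact ⟨c, hc, fun h => hac (by rw [hax, h])⟩
    · exact ⟨a, ha, hax⟩
  have hdegR0 : ∀ v, v ∈ Z 0 → (mhat : ℝ) < (G.neighborSet v).ncard + b + 1 := by
    intro v hv
    have hnb := hdense v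
    rw [hatH_nbhd_zero hcov hdisj hv] at hnb
    have hcompl : 1 + ({v}ᶜ : Set V).ncard = mhat := by
      rw [← hnV, ← Set.ncard_singleton v]
      exact Set.ncard_add_ncard_compl {v}
    have h3 : mhat < (G.neighborSet v).ncard + b + 1 := by omega
    exact_mod_cast h3
  have hdegRi : ∀ v (i : Fin 4), i ≠ 0 → v ∈ Z i →
      (mhat : ℝ) < (G.neighborSet v).ncard + b + m i := by
    intro v i hi0 hv
    have hnb := hdense v
    rw [hatH_nbhd_part hcov hdisj hi0 hv] at hnb
    have hcompl : m i + ((Z i)ᶜ : Set V).ncard = mhat := by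
      rw [← hnV, ← hsize i]
      exact Set.ncard_add_ncard_compl (Z i)
    have h3 : mhat < (G.neighborSet v).ncard + b + m i := by omega
    exact_mod_cast h3
  have hcontra : ∀ N : G.Subgraph, N.IsMatching → N.verts.ncard = M.verts.ncard →
      ∀ v₁ v₂ (i₁ i₂ : Fin 4), v₁ ∈ Z i₁ → v₂ ∈ Z i₂ → v₁ ∉ N.verts → v₂ ∉ N.verts →
      v₁ ≠ v₂ → (i₁ = 0 ∨ i₂ = 0 ∨ i₁ ≠ i₂) → False := by
    intro N hN hNs v₁ v₂ i₁ i₂ hv₁ hv₂ he₁ he₂ hvne hcase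
    have hmaxN : ∀ N' : G.Subgraph, N'.IsMatching → N'.verts.ncard ≤ N.verts.ncard :=
      fun N' h' => le_of_le_of_eq (hmax N' h') hNs.symm
    have hK := key_bound hN hmaxN he₁ he₂ hvne
    rw [hNs] at hK
    have hKR : ((G.neighborSet v₁).ncard : ℝ) + (G.neighborSet v₂).ncard + U.ncard ≤ mhat := by
      have h4 : (G.neighborSet v₁).ncard + (G.neighborSet v₂).ncard + U.ncard ≤ mhat := by omega
      exact_mod_cast h4
    by_cases h₁ : i₁ = 0 <;> by_cases h₂ : i₂ = 0
    · subst h₁; subst h₂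
      have d₁ := hdegR0 v₁ hv₁
      have d₂ := hdegR0 v₂ hv₂
      have hm0R : (m 0 : ℝ) ≤ mhat := by exact_mod_cast hm0n
      linarith
    · subst h₁
      have d₁ := hdegR0 v₁ hv₁
      have d₂ := hdegRi v₂ i₂ h₂ hv₂
      have hpR : (m 0 : ℝ) + m i₂ ≤ mhat := by
        exact_mod_cast hpairn i₂ (fun h => h₂ h.symm)
      linarith
    · subst h₂
      have d₁ := hdegRi v₁ i₁ h₁ hv₁
      have d₂ := hdegR0 v₂ hv₂
      have hpR : (m 0 : ℝ) + m i₁ ≤ mhat := by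
        exact_mod_cast hpairn i₁ (fun h => h₁ h.symm)
      linarith
    · have h12 : i₁ ≠ i₂ := by
        rcases hcase with h | h | h
        exacts [absurd h h₁, absurd h h₂, h]
      have d₁ := hdegRi v₁ i₁ h₁ hv₁
      have d₂ := hdegRi v₂ i₂ h₂ hv₂
      have htR : (m 0 : ℝ) + m i₁ + m i₂ ≤ mhat := by
        exact_mod_cast htripn i₁ i₂ (fun h => h₁ h.symm) (fun h => h₂ h.symm) h12
      linarith
  obtain ⟨u₁, hu₁U, u₁', hu₁'U, hne₁⟩ := (Set.one_lt_ncard (Set.toFinite _)).mp hu2'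
  obtain ⟨ia, hia⟩ := exists_part hcov u₁
  have hia0 : ia ≠ 0 := by
    intro h0
    obtain ⟨j, hj⟩ := exists_part hcov u₁'
    exact hcontra M hM rfl u₁ u₁' ia j hia hj hu₁U hu₁'U hne₁ (Or.inl h0)
  have hUZ : ∀ v ∈ U, v ∈ Z ia := by
    intro v hv
    obtain ⟨j, hj⟩ := exists_part hcov v
    by_cases hvu : v = u₁
    · subst hvu; exact (part_eq hdisj hj hia) ▸ hj
    · by_cases hji : j = ia
      · exact hji ▸ hj
      · exact (hcontra M hM rfl u₁ v ia j hia hj hu₁U hv (Ne.symm hvu)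
          (Or.inr (Or.inr (fun h => hji h.symm)))).elim
  have hu₁Z : u₁ ∈ Z ia := hia
  have hex : ∀ v, ∃ w, v ∈ M.verts → M.Adj v w := by
    intro v
    by_cases hv : v ∈ M.verts
    · obtain ⟨w, hw⟩ := (hM hv).exists
      exact ⟨w, fun _ => hw⟩
    · exact ⟨u₁, fun h => absurd h hv⟩
  choose pa hpa using hex
  have huniq : ∀ v w, M.Adj v w → w = pa v := fun v w h =>
    (hM h.fst_mem).unique h (hpa v h.fst_mem)
  have hinv : ∀ v ∈ M.verts, pa (pa v) = v := fun v hv => (huniq (pa v) v (hpa v hv).symm).symm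
  have hpainj : ∀ a ∈ M.verts, ∀ c ∈ M.verts, pa a = pa c → a = c := by
    intro a ha c hc h
    rw [← hinv a ha, ← hinv c hc, h]
  have hBM : ∀ v, v ∈ (Z ia)ᶜ → v ∈ M.verts := by
    intro v hv
    by_contra hvM
    exact hv (hUZ v hvM)
  have hcross : ∀ v w, M.Adj v w → v ∈ Z ia → w ∉ Z ia := by
    intro v w hvw hv
    have hadj : (hatH Z).Adj v w := hsub (M.adj_sub hvw)
    have h5 : w ∈ (hatH Z).neighborSet v := hadj
    rw [hatH_nbhd_part hcov hdisj hia0 hv] at h5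
    exact h5
  set Xs : Set V := M.verts ∩ Z ia with hXsdef
  set QB : Set V := pa '' Xs with hQBdef
  set PV : Set V := (Z ia)ᶜ \ QB with hPVdef
  have hXsM : Xs ⊆ M.verts := Set.inter_subset_left
  have hQBB : QB ⊆ (Z ia)ᶜ := by
    rintro w ⟨x, hx, rfl⟩
    exact hcross x (pa x) (hpa x hx.1) hx.2
  have hQBM : QB ⊆ M.verts := by
    rintro w ⟨x, hx, rfl⟩
    exact (hpa x hx.1).snd_mem
  have hpaQB : ∀ y ∈ QB, pa y ∈ Z ia ∧ pa y ∈ M.verts := by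
    rintro y ⟨x, hx, rfl⟩
    rw [hinv x hx.1]
    exact ⟨hx.2, hx.1⟩
  have hPVfacts : ∀ z ∈ PV, z ∈ M.verts ∧ pa z ∉ Z ia ∧ pa z ∉ QB := by
    rintro z ⟨hz1, hz2⟩
    have hzM : z ∈ M.verts := hBM z hz1
    refine ⟨hzM, ?_, ?_⟩
    · intro hpaZ
      exact hz2 ⟨pa z, ⟨(hpa z hzM).snd_mem, hpaZ⟩, hinv z hzM⟩
    · rintro ⟨x₁, hx₁, hpp⟩
      have h6 : x₁ = z := hpainj x₁ hx₁.1 z hzM hpp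
      exact hz1 (h6 ▸ hx₁.2)
  have hEX1 : ∀ z ∈ PV, ∀ x ∈ U, ¬ G.Adj x z := by
    intro z hzPV x hxU hadj
    have hzM : z ∈ M.verts := (hPVfacts z hzPV).1
    have hMz : M.Adj z (pa z) := hpa z hzM
    obtain ⟨M', hM', hv', -⟩ := matching_exchange hM hMz hxU hadj
    have hs' : M'.verts.ncard = M.verts.ncard := by
      rw [hv']; exact my_ncard_exchange hxU hMz.snd_mem
    obtain ⟨u₂, hu₂U, hu₂x⟩ := hpick x
    have h1' : u₂ ∉ M'.verts := by
      rw [hv']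
      rintro (h | ⟨h, -⟩)
      · exact hu₂x h
      · exact hu₂U h
    have hpzM : pa z ∈ M.verts := hMz.snd_mem
    have h2' : pa z ∉ M'.verts := by
      rw [hv']
      rintro (h | ⟨-, h⟩)
      · exact hxU (h ▸ hpzM)
      · exact h rfl
    obtain ⟨jz, hjz⟩ := exists_part hcov (pa z)
    have hpz_notZ : pa z ∉ Z ia := (hPVfacts z hzPV).2.1
    have hjia : ia ≠ jz := fun h => hpz_notZ (h ▸ hjz)
    exact hcontra M' hM' hs' u₂ (pa z) ia jz (hUZ u₂ hu₂U) hjz h1' h2'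
      (fun h => hpz_notZ (h ▸ hUZ u₂ hu₂U)) (Or.inr (Or.inr hjia))
  have hEX2 : ∀ y ∈ QB, (∃ x' ∈ U, G.Adj x' y) → ∀ z ∈ PV, ¬ G.Adj (pa y) z := by
    rintro y hyQB ⟨x', hx'U, hx'adj⟩ z hzPV hadj
    obtain ⟨x₀, hx₀Xs, rfl⟩ := hyQB
    have hx₀M : x₀ ∈ M.verts := hx₀Xs.1
    rw [hinv x₀ hx₀M] at hadj
    have hx'M : x' ∉ M.verts := hx'U
    have hM1adj : M.Adj (pa x₀) x₀ := (hpa x₀ hx₀M).symm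
    obtain ⟨M1, hM1, hv1, hpres⟩ := matching_exchange hM hM1adj hx'M hx'adj
    have hzM : z ∈ M.verts := (hPVfacts z hzPV).1
    have hMz : M.Adj z (pa z) := hpa z hzM
    have hpax₀QB : pa x₀ ∈ QB := ⟨x₀, hx₀Xs, rfl⟩
    have hz1 : z ≠ pa x₀ := fun h => hzPV.2 (h ▸ hpax₀QB)
    have hz2 : z ≠ x₀ := fun h => hzPV.1 (h ▸ hx₀Xs.2)
    have hz3 : pa z ≠ pa x₀ := fun h => (hPVfacts z hzPV).2.2 (h ▸ hpax₀QB)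
    have hz4 : pa z ≠ x₀ := fun h => (hPVfacts z hzPV).2.1 (h ▸ hx₀Xs.2)
    have hM1z : M1.Adj z (pa z) := hpres z (pa z) hMz (by simp [hz1, hz2]) (by simp [hz3, hz4])
    have hx₀M1 : x₀ ∉ M1.verts := by
      rw [hv1]
      rintro (h | ⟨-, h⟩)
      · exact hx'M (h ▸ hx₀M)
      · exact h rfl
    obtain ⟨M2, hM2, hv2, -⟩ := matching_exchange hM1 hM1z hx₀M1 hadj
    have hs1 : M1.verts.ncard = M.verts.ncard := by
      rw [hv1]; exact my_ncard_exchange hx'M hx₀M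
    have hpzM1 : pa z ∈ M1.verts := by
      rw [hv1]
      exact Set.mem_insert_iff.mpr (Or.inr ⟨hMz.snd_mem, by simp [hz4]⟩)
    have hs2 : M2.verts.ncard = M.verts.ncard := by
      rw [hv2, my_ncard_exchange hx₀M1 hpzM1, hs1]
    obtain ⟨u₂, hu₂U, hu₂x'⟩ := hpick x'
    have hu₂M : u₂ ∉ M.verts := hu₂U
    have h1' : u₂ ∉ M2.verts := by
      rw [hv2, hv1]
      rintro (h | ⟨h', -⟩)
      · exact hu₂M (h ▸ hx₀M)
      · rcases h' with h | ⟨h, -⟩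
        · exact hu₂x' h
        · exact hu₂M h
    have h2' : pa z ∉ M2.verts := by
      rw [hv2]
      rintro (h | ⟨-, h⟩)
      · exact hz4 h
      · exact h rfl
    obtain ⟨jz, hjz⟩ := exists_part hcov (pa z)
    have hpz_notZ : pa z ∉ Z ia := (hPVfacts z hzPV).2.1
    have hjia : ia ≠ jz := fun h => hpz_notZ (h ▸ hjz)
    exact hcontra M2 hM2 hs2 u₂ (pa z) ia jz (hUZ u₂ hu₂U) hjz h1' h2'
      (fun h => hpz_notZ (h ▸ hUZ u₂ hu₂U)) (Or.inr (Or.inr hjia))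
  have hQx : QB.ncard = Xs.ncard :=
    Set.ncard_image_of_injOn (fun a ha c hc h => hpainj a (hXsM ha) c (hXsM hc) h)
  have hZsplit : m ia = Xs.ncard + U.ncard := by
    have hset : Z ia = Xs ∪ U := by
      ext v
      constructor
      · intro hv
        by_cases hvM : v ∈ M.verts
        · exact Or.inl ⟨hvM, hv⟩
        · exact Or.inr hvM
      · rintro (hv | hv)
        · exact hv.2
        · exact hUZ v hv
    have hdXU : Disjoint Xs U := by
      rw [Set.disjoint_left]
      intro a haXs haU
      exact haU (hXsM haXs)
    rw [← hsize ia, hset, Set.ncard_union_eq hdXU]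
  have hcomplB : ((Z ia)ᶜ).ncard + m ia = mhat := by
    have h7 := Set.ncard_add_ncard_compl (Z ia)
    rw [hsize ia, hnV] at h7
    omega
  have hBsplit : ((Z ia)ᶜ).ncard = QB.ncard + PV.ncard := by
    have h8 : QB ∪ PV = (Z ia)ᶜ := Set.union_diff_cancel hQBB
    rw [← h8, Set.ncard_union_eq Set.disjoint_sdiff_right]
  have hm0B : m 0 ≤ ((Z ia)ᶜ).ncard := by
    rw [← hsize 0]
    refine Set.ncard_le_ncard ?_ (Set.toFinite _)
    intro v hv hvia
    exact Set.disjoint_left.mp (hdisj 0 ia (fun h => hia0 h.symm)) hv hvia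
  rcases Set.eq_empty_or_nonempty PV with hPVe | ⟨z₀, hz₀⟩
  · have h9 : ((Z ia)ᶜ).ncard = Xs.ncard := by
      rw [hBsplit, hPVe, Set.ncard_empty, hQx]
      omega
    have h10 : mhat + U.ncard = 2 * m ia := by omega
    have hmiaR := hm ia hia0
    have hpR : (m 0 : ℝ) + m ia ≤ mhat := by
      exact_mod_cast hpairn ia (fun h => hia0 h.symm)
    have h10R : (mhat : ℝ) + U.ncard = 2 * m ia := by exact_mod_cast h10
    linarith
  · set AQ : Set V := {y ∈ QB | ∃ x ∈ U, G.Adj x y} with hAQdef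
    have hAQQB : AQ ⊆ QB := fun y hy => hy.1
    obtain ⟨jz, hjz⟩ := exists_part hcov z₀
    have hz₀B : z₀ ∈ (Z ia)ᶜ := hz₀.1
    have hjzia : jz ≠ ia := fun h => hz₀B (h ▸ hjz)
    have hSZia : ∀ w ∈ U ∪ pa '' AQ, w ∈ Z ia := by
      rintro w (hw | ⟨y, hy, rfl⟩)
      · exact hUZ w hw
      · exact (hpaQB y (hAQQB hy)).1
    have hibudget : (U ∪ pa '' AQ).ncard < b := by
      apply budget hsub hdense z₀ (S := U ∪ pa '' AQ)
      · intro w hw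
        exact hatH_adj_of_ne_part hdisj hjzia hjz (hSZia w hw)
      · rintro w (hw | ⟨y, hy, rfl⟩) hadj
        · exact hEX1 z₀ hz₀ w hw hadj.symm
        · exact hEX2 y (hAQQB hy) hy.2 z₀ hz₀ hadj.symm
    have hpaAQinj : Set.InjOn pa AQ := fun a ha c hc h =>
      hpainj a (hQBM (hAQQB ha)) c (hQBM (hAQQB hc)) h
    have hdisjS : Disjoint U (pa '' AQ) := by
      rw [Set.disjoint_left]
      rintro w hwU ⟨y, hy, rfl⟩
      exact hwU ((hpaQB y (hAQQB hy)).2)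
    have hScard : U.ncard + AQ.ncard < b := by
      have h11 := hibudget
      rw [Set.ncard_union_eq hdisjS, Set.ncard_image_of_injOn hpaAQinj] at h11
      exact h11
    have hUT : (PV ∪ (QB \ AQ)).ncard < b := by
      apply budget hsub hdense u₁ (S := PV ∪ (QB \ AQ))
      · intro w hw
        have hwB : w ∈ (Z ia)ᶜ := by
          rcases hw with hw | hw
          · exact hw.1
          · exact hQBB hw.1
        rw [hatH_nbhd_part hcov hdisj hia0 hu₁Z]
        exact hwB
      · rintro w (hw | hw) hadj
        · exact hEX1 w hw u₁ hu₁U hadj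
        · exact hw.2 ⟨hw.1, u₁, hu₁U, hadj⟩
    have hdisjPQ : Disjoint PV (QB \ AQ) :=
      Set.disjoint_sdiff_left.mono_right Set.diff_subset
    have hQBd : (QB \ AQ).ncard + AQ.ncard = QB.ncard :=
      Set.ncard_diff_add_ncard_of_subset hAQQB
    have hUT2 : PV.ncard + (QB \ AQ).ncard < b := by
      rw [← Set.ncard_union_eq hdisjPQ]; exact hUT
    have hfin2 : U.ncard + m 0 + 2 ≤ 2 * b := by omega
    have hfinR : (U.ncard : ℝ) + m 0 + 2 ≤ 2 * b := by exact_mod_cast hfin2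
    linarith

end Stmt10Aux

namespace Stmt10Aux
open Set

lemma connected_half {V : Type*} [Fintype V] (Z : Fin 4 → Set V) (m : Fin 4 → ℕ) (b : ℕ)
    (hcov : (⋃ i, Z i) = Set.univ)
    (hdisj : ∀ i j : Fin 4, i ≠ j → Disjoint (Z i) (Z j))
    (hsize : ∀ i, (Z i).ncard = m i)
    (G : SimpleGraph V) (hsub : G ≤ hatH Z)
    (hdense : ∀ v : V, ((hatH Z).neighborSet v).ncard < (G.neighborSet v).ncard + b)
    (mhat : ℕ) (hmhat : mhat = m 0 + m 1 + m 2 + m 3)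
    (hm : ∀ i : Fin 4, i ≠ 0 → (m i : ℝ) ≤ 2 * b + 2 * Real.sqrt mhat)
    (hm0 : 0 < m 0)
    (hbig : 2 * (b : ℝ) + 3 * Real.sqrt mhat ≤ min (mhat : ℝ) ((m 0 : ℝ) + mhat - 2 * b)) :
    G.Connected := by
  classical
  set s : ℝ := Real.sqrt mhat with hsdef
  have hs0 : 0 ≤ s := Real.sqrt_nonneg _
  have hnV : Nat.card V = mhat := by
    rw [← Set.ncard_univ, ncard_univ_eq hcov hdisj, hsize, hsize, hsize, hsize, hmhat]
  have hm0n : m 0 ≤ mhat := by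
    rw [← hsize 0, ← hnV, ← Set.ncard_univ]
    exact Set.ncard_le_ncard (Set.subset_univ _) (Set.toFinite _)
  have hnR : 2 * (b : ℝ) + 3 * s ≤ mhat := le_trans hbig (min_le_left _ _)
  have hsR : 4 * (b : ℝ) + 3 * s ≤ m 0 + mhat := by
    have := le_trans hbig (min_le_right _ _)
    linarith
  have hmhat1 : 1 ≤ mhat := le_trans hm0 hm0n
  have hs1 : 1 ≤ s := by
    have h1 : (1 : ℝ) ≤ mhat := by exact_mod_cast hmhat1
    have hsq : s * s = (mhat : ℝ) := Real.mul_self_sqrt (by positivity)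
    nlinarith
  have hZ0ne : (Z 0).Nonempty := by
    rw [← Set.ncard_pos (Set.toFinite _), hsize]
    exact hm0
  obtain ⟨z₀, hz₀⟩ := hZ0ne
  have hmiss : ∀ v ∈ Z 0, ({w | ¬ G.Reachable v w}).ncard < b := by
    intro v hv
    apply budget hsub hdense v
    · intro w hw
      rw [hatH_nbhd_zero hcov hdisj hv]
      simp only [Set.mem_compl_iff, Set.mem_singleton_iff]
      rintro rfl
      exact hw (SimpleGraph.Reachable.refl w)
    · intro w hw hadj
      exact hw hadj.reachable
  have hsplit : ∀ v : V, ({w | G.Reachable v w}).ncard + ({w | ¬ G.Reachable v w}).ncard = mhat := by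
    intro v
    have hc : {w | ¬ G.Reachable v w} = {w | G.Reachable v w}ᶜ := rfl
    rw [hc, ← hnV]
    exact Set.ncard_add_ncard_compl _
  rw [SimpleGraph.connected_iff]
  refine ⟨?_, ⟨z₀⟩⟩
  suffices hreach : ∀ v, G.Reachable z₀ v by
    intro a c
    exact (hreach a).symm.trans (hreach c)
  by_contra hv₀e
  push_neg at hv₀e
  obtain ⟨v₀, hv₀⟩ := hv₀e
  set D : Set V := {w | G.Reachable v₀ w} with hDdef
  have hDR : ∀ w ∈ D, ¬ G.Reachable z₀ w := fun w hw hz => hv₀ (hz.trans (Reachable.symm hw))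
  have hDb : D.ncard < b := by
    have hsubD : D ⊆ {w | ¬ G.Reachable z₀ w} := fun w hw => hDR w hw
    exact lt_of_le_of_lt (Set.ncard_le_ncard hsubD (Set.toFinite _)) (hmiss z₀ hz₀)
  have hRzb : mhat < ({w | G.Reachable z₀ w}).ncard + b := by
    have h1 := hmiss z₀ hz₀
    have h2 := hsplit z₀
    omega
  have hDZ0 : ∀ w ∈ D, w ∉ Z 0 := by
    intro w hwD hwZ0
    have hsub2 : {c | G.Reachable z₀ c} ⊆ {c | ¬ G.Reachable w c} := by
      intro c hc hwc
      exact hv₀ ((hc.trans hwc.symm).trans (Reachable.symm hwD))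
    have h1 : ({c | G.Reachable z₀ c}).ncard ≤ ({c | ¬ G.Reachable w c}).ncard :=
      Set.ncard_le_ncard hsub2 (Set.toFinite _)
    have h2 := hmiss w hwZ0
    have h3 : mhat < 2 * b := by omega
    have h3R : (mhat : ℝ) < 2 * b := by exact_mod_cast h3
    linarith
  obtain ⟨iv, hiv⟩ := exists_part hcov v₀
  have hv₀D : v₀ ∈ D := SimpleGraph.Reachable.refl v₀
  have hiv0 : iv ≠ 0 := fun h => hDZ0 v₀ hv₀D (h ▸ hiv)
  have hnbrD : ∀ w, G.Adj v₀ w → w ∈ D := fun w h => h.reachable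
  by_cases hDin : ∀ w ∈ D, w ∈ Z iv
  · have hb1 : ((Z iv)ᶜ).ncard < b := by
      apply budget hsub hdense v₀
      · intro w hw
        rw [hatH_nbhd_part hcov hdisj hiv0 hiv]
        exact hw
      · intro w hw hadj
        exact hw (hDin w (hnbrD w hadj))
    have hcompl : ((Z iv)ᶜ).ncard + m iv = mhat := by
      have h7 := Set.ncard_add_ncard_compl (Z iv)
      rw [hsize iv, hnV] at h7
      omega
    have hm0c : m 0 ≤ ((Z iv)ᶜ).ncard := by
      rw [← hsize 0]
      refine Set.ncard_le_ncard ?_ (Set.toFinite _)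
      intro v hv hvia
      exact Set.disjoint_left.mp (hdisj 0 iv (fun h => hiv0 h.symm)) hv hvia
    have hmivR := hm iv hiv0
    have e1 : (((Z iv)ᶜ).ncard : ℝ) + m iv = mhat := by exact_mod_cast hcompl
    have e2 : (((Z iv)ᶜ).ncard : ℝ) < b := by exact_mod_cast hb1
    have e3 : (m 0 : ℝ) ≤ (((Z iv)ᶜ).ncard : ℝ) := by exact_mod_cast hm0c
    linarith
  · push_neg at hDin
    obtain ⟨w', hw'D, hw'Z⟩ := hDin
    obtain ⟨jw, hjw⟩ := exists_part hcov w'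
    have hjwiv : jw ≠ iv := fun h => hw'Z (h ▸ hjw)
    have hjw0 : jw ≠ 0 := fun h => hDZ0 w' hw'D (h ▸ hjw)
    have hb1 : (((Z iv)ᶜ \ D)).ncard < b := by
      apply budget hsub hdense v₀
      · intro w hw
        rw [hatH_nbhd_part hcov hdisj hiv0 hiv]
        exact hw.1
      · intro w hw hadj
        exact hw.2 (hnbrD w hadj)
    have hb2 : (((Z jw)ᶜ \ D)).ncard < b := by
      apply budget hsub hdense w'
      · intro w hw
        rw [hatH_nbhd_part hcov hdisj hjw0 hjw]
        exact hw.1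
      · intro w hw hadj
        exact hw.2 (hw'D.trans hadj.reachable)
    have hc1 : ((Z iv)ᶜ).ncard ≤ ((Z iv)ᶜ \ D).ncard + D.ncard :=
      Set.ncard_le_ncard_diff_add_ncard _ _ (Set.toFinite _)
    have hc2 : ((Z jw)ᶜ).ncard ≤ ((Z jw)ᶜ \ D).ncard + D.ncard :=
      Set.ncard_le_ncard_diff_add_ncard _ _ (Set.toFinite _)
    have hcompl1 : ((Z iv)ᶜ).ncard + m iv = mhat := by
      have h7 := Set.ncard_add_ncard_compl (Z iv)
      rw [hsize iv, hnV] at h7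
      omega
    have hcompl2 : ((Z jw)ᶜ).ncard + m jw = mhat := by
      have h7 := Set.ncard_add_ncard_compl (Z jw)
      rw [hsize jw, hnV] at h7
      omega
    have htr : m 0 + m iv + m jw ≤ mhat := by
      rw [← hsize 0, ← hsize iv, ← hsize jw, ← hnV, ← Set.ncard_univ]
      exact triple_le hdisj (fun h => hiv0 h.symm) (fun h => hjw0 h.symm)
        (fun h => hjwiv h.symm)
    have hfinN : m 0 + mhat + 4 ≤ 4 * b := by omega
    have hfinR : ((m 0 : ℝ)) + mhat + 4 ≤ 4 * b := by exact_mod_cast hfinN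
    linarith

end Stmt10Aux

/-- Let G be a b-dense subgraph of Ĥ(m₀; m₁, m₂, m₃), m̂ = m₀+m₁+m₂+m₃, with
m₁, m₂, m₃ ≤ 2b + 2√m̂ and b ≥ 6√m̂. Then G contains a matching saturating at least
min{m̂, m₀ + m̂ − 2b} − 5√m̂ vertices; and if moreover m₀ > 0 and
min{m̂, m₀ + m̂ − 2b} ≥ 2b + 3√m̂, then G is connected. -/
theorem stmt10 {V : Type*} [Fintype V] (Z : Fin 4 → Set V) (m : Fin 4 → ℕ) (b : ℕ)
    (hcov : (⋃ i, Z i) = Set.univ)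
    (hdisj : ∀ i j : Fin 4, i ≠ j → Disjoint (Z i) (Z j))
    (hsize : ∀ i, (Z i).ncard = m i)
    (G : SimpleGraph V) (hsub : G ≤ hatH Z)
    (hdense : ∀ v : V, ((hatH Z).neighborSet v).ncard < (G.neighborSet v).ncard + b)
    (mhat : ℕ) (hmhat : mhat = m 0 + m 1 + m 2 + m 3)
    (hm : ∀ i : Fin 4, i ≠ 0 → (m i : ℝ) ≤ 2 * b + 2 * Real.sqrt mhat)
    (hb : 6 * Real.sqrt mhat ≤ b) :
    (∃ M : G.Subgraph, M.IsMatching ∧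
        min (mhat : ℝ) ((m 0 : ℝ) + mhat - 2 * b) - 5 * Real.sqrt mhat ≤ M.verts.ncard) ∧
      (0 < m 0 → 2 * b + 3 * Real.sqrt mhat ≤ min (mhat : ℝ) ((m 0 : ℝ) + mhat - 2 * b) →
        G.Connected) := by
  constructor
  · exact Stmt10Aux.matching_half Z m b hcov hdisj hsize G hsub hdense mhat hmhat hm
  · intro hm0 hbig
    exact Stmt10Aux.connected_half Z m b hcov hdisj hsize G hsub hdense mhat hmhat hm hm0
      (by exact_mod_cast hbig)
end

section
/- Let G = (V,E) be a graph on N vertices with minimum degree at least N − N/8, whose edges are coloured with three colours in such a way that G contains no monochromatic component with a matching saturating at least N/2 vertices, and all monochromatic components of G have fewer than 3N/4 vertices. Then for each pair of monochromatic components F₁ = (V₁,E₁) of the first colour and F₂ = (V₂,E₂) of the second colour with |V₁|, |V₂| ≥ N/2, there exists a monochromatic component F₃ = (V₃,E₃) of the third colour such that V = V₁ ∪ V₂ ∪ V₃. -/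
open SimpleGraph Finset

/-- In a near-complete bipartite graph lying in one colour class, there is a large matching
inside a single connected component. -/
lemma aux_matching {V : Type*} [Fintype V] [DecidableEq V] (H : SimpleGraph V)
    [DecidableRel H.Adj] (A B : Finset V) (k : ℝ)
    (hk : 0 ≤ k)
    (hdisj : ∀ a ∈ A, a ∉ B)
    (hA : 2 * k + 1 ≤ (A.card : ℝ)) (hB : 2 * k + 1 ≤ (B.card : ℝ))
    (hAB : ∀ a ∈ A, (((B.filter fun b => ¬ H.Adj a b).card : ℝ)) ≤ k)
    (hBA : ∀ b ∈ B, (((A.filter fun a => ¬ H.Adj a b).card : ℝ)) ≤ k)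
    (hle : A.card ≤ B.card) :
    ∃ (K : H.ConnectedComponent) (M : H.Subgraph),
      M.IsMatching ∧ M.verts ⊆ K.supp ∧ (2 * A.card : ℝ) ≤ M.verts.ncard := by
  -- Hall's condition for the bipartite adjacency from A to B
  have hhall : ∀ s : Finset {x // x ∈ A},
      s.card ≤ (s.biUnion fun a => B.filter fun b => H.Adj a.1 b).card := by
    intro s
    rcases s.eq_empty_or_nonempty with rfl | ⟨a₀, ha₀⟩
    · simp
    by_cases hcov : B ⊆ s.biUnion fun a => B.filter fun b => H.Adj a.1 b
    · calc s.card ≤ Fintype.card {x // x ∈ A} := Finset.card_le_univ s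
        _ = A.card := Fintype.card_coe A
        _ ≤ B.card := hle
        _ ≤ _ := Finset.card_le_card hcov
    · obtain ⟨b, hbB, hbU⟩ := Set.not_subset.mp fun h => hcov fun x hx => h hx
      -- every a ∈ s is non-adjacent to b
      have hs : s.image (fun a => a.1) ⊆ A.filter fun a => ¬ H.Adj a b := by
        intro x hx
        obtain ⟨a, ha, rfl⟩ := Finset.mem_image.mp hx
        refine Finset.mem_filter.mpr ⟨a.2, fun hadj => hbU ?_⟩
        exact Finset.mem_biUnion.mpr ⟨a, ha, Finset.mem_filter.mpr ⟨hbB, hadj⟩⟩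
      have hscard : (s.card : ℝ) ≤ k := by
        have := Finset.card_le_card hs
        rw [Finset.card_image_of_injective _ Subtype.coe_injective] at this
        exact le_trans (Nat.cast_le.mpr this) (hBA b hbB)
      -- t a₀ is big
      have hsub : (B.filter fun b => H.Adj a₀.1 b) ⊆
          s.biUnion fun a => B.filter fun b => H.Adj a.1 b :=
        Finset.subset_biUnion_of_mem (fun a : {x // x ∈ A} => B.filter fun b => H.Adj a.1 b) ha₀
      have hsplit : (B.filter fun b => H.Adj a₀.1 b).card
          + (B.filter fun b => ¬ H.Adj a₀.1 b).card = B.card :=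
        Finset.card_filter_add_card_filter_not _
      have h1 : (k + 1 : ℝ) ≤ ((B.filter fun b => H.Adj a₀.1 b).card : ℝ) := by
        have h2 := hAB a₀.1 a₀.2
        have : ((B.filter fun b => H.Adj a₀.1 b).card : ℝ)
            = (B.card : ℝ) - ((B.filter fun b => ¬ H.Adj a₀.1 b).card : ℝ) := by
          rw [← hsplit]; push_cast; ring
        rw [this]; linarith
      have : (s.card : ℝ) ≤ ((B.filter fun b => H.Adj a₀.1 b).card : ℝ) := by linarith
      exact le_trans (Nat.cast_le.mp this) (Finset.card_le_card hsub)
  obtain ⟨f, hfinj, hf⟩ :=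
    (Finset.all_card_le_biUnion_card_iff_exists_injective
      (fun a : {x // x ∈ A} => B.filter fun b => H.Adj a.1 b)).mp hhall
  have hfB : ∀ a, f a ∈ B := fun a => (Finset.mem_filter.mp (hf a)).1
  have hfadj : ∀ a, H.Adj a.1 (f a) := fun a => (Finset.mem_filter.mp (hf a)).2
  -- A is nonempty
  have hApos : (0 : ℝ) < A.card := by linarith
  obtain ⟨a₀, ha₀⟩ := Finset.card_pos.mp (by exact_mod_cast hApos)
  set K := H.connectedComponentMk a₀ with hK
  -- every element of A lies in K
  have hAsupp : ∀ a ∈ A, H.connectedComponentMk a = K := by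
    intro a ha
    -- common neighbour of a and a₀ in B
    have hsub : B \ ((B.filter fun b => ¬ H.Adj a b) ∪ (B.filter fun b => ¬ H.Adj a₀ b))
        ⊆ B.filter fun b => H.Adj a b ∧ H.Adj a₀ b := by
      intro b hb
      simp only [Finset.mem_sdiff, Finset.mem_union, Finset.mem_filter, not_or, not_and,
        not_not] at hb ⊢
      exact ⟨hb.1, by tauto, by tauto⟩
    have hcard : (1 : ℝ) ≤ ((B.filter fun b => H.Adj a b ∧ H.Adj a₀ b).card : ℝ) := by
      have h1 : (B.card : ℝ) ≤ ((B \ ((B.filter fun b => ¬ H.Adj a b)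
          ∪ (B.filter fun b => ¬ H.Adj a₀ b))).card : ℝ)
          + ((B.filter fun b => ¬ H.Adj a b).card : ℝ)
          + ((B.filter fun b => ¬ H.Adj a₀ b).card : ℝ) := by
        have := Finset.card_le_card_sdiff_add_card (s := B)
          (t := (B.filter fun b => ¬ H.Adj a b) ∪ (B.filter fun b => ¬ H.Adj a₀ b))
        have h2 := Finset.card_union_le (B.filter fun b => ¬ H.Adj a b)
          (B.filter fun b => ¬ H.Adj a₀ b)
        push_cast
        have := le_trans this (by omega :
          (B \ ((B.filter fun b => ¬ H.Adj a b) ∪ (B.filter fun b => ¬ H.Adj a₀ b))).card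
          + ((B.filter fun b => ¬ H.Adj a b) ∪ (B.filter fun b => ¬ H.Adj a₀ b)).card ≤
          (B \ ((B.filter fun b => ¬ H.Adj a b) ∪ (B.filter fun b => ¬ H.Adj a₀ b))).card
          + (B.filter fun b => ¬ H.Adj a b).card + (B.filter fun b => ¬ H.Adj a₀ b).card)
        exact_mod_cast this
      have h3 := hAB a ha
      have h4 := hAB a₀ ha₀
      have h5 : ((B \ ((B.filter fun b => ¬ H.Adj a b)
          ∪ (B.filter fun b => ¬ H.Adj a₀ b))).card : ℝ)
          ≤ ((B.filter fun b => H.Adj a b ∧ H.Adj a₀ b).card : ℝ) :=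
        Nat.cast_le.mpr (Finset.card_le_card hsub)
      linarith
    have hne : (B.filter fun b => H.Adj a b ∧ H.Adj a₀ b).Nonempty := by
      rw [← Finset.card_pos]
      exact_mod_cast lt_of_lt_of_le zero_lt_one hcard
    obtain ⟨b, hb⟩ := hne
    obtain ⟨-, hba, hba₀⟩ := Finset.mem_filter.mp hb
    exact ConnectedComponent.sound (hba.reachable.trans hba₀.reachable.symm)
  have hfnA : ∀ a, f a ∉ A := fun a ha => hdisj (f a) ha (hfB a)
  refine ⟨K, ⟨↑A ∪ Set.range f,
      fun u v => (∃ a : {x // x ∈ A}, a.1 = u ∧ f a = v) ∨ (∃ a, a.1 = v ∧ f a = u),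
      ?_, ?_, ?_⟩, ?_, ?_, ?_⟩
  · rintro u v (⟨a, rfl, rfl⟩ | ⟨a, rfl, rfl⟩)
    exacts [hfadj a, (hfadj a).symm]
  · rintro u v (⟨a, rfl, rfl⟩ | ⟨a, rfl, rfl⟩)
    · exact Or.inl (Finset.mem_coe.mpr a.2)
    · exact Or.inr ⟨a, rfl⟩
  · refine ⟨?_⟩; rintro u v (h | h)
    exacts [Or.inr h, Or.inl h]
  · -- IsMatching
    rintro v (hv | ⟨a, rfl⟩)
    · refine ⟨f ⟨v, hv⟩, Or.inl ⟨⟨v, hv⟩, rfl, rfl⟩, ?_⟩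
      rintro w (⟨a', ha1, rfl⟩ | ⟨a', rfl, ha2⟩)
      · exact congrArg f (Subtype.ext ha1)
      · exact absurd hv (ha2 ▸ hfnA a')
    · refine ⟨a.1, Or.inr ⟨a, rfl, rfl⟩, ?_⟩
      rintro w (⟨a', ha1, ha2⟩ | ⟨a', rfl, ha2⟩)
      · exact absurd (ha1 ▸ a'.2) (hfnA a)
      · cases hfinj ha2; rfl
  · -- verts ⊆ K.supp
    rintro v (hv | ⟨a, rfl⟩)
    · exact (ConnectedComponent.mem_supp_iff _ _).mpr (hAsupp v (Finset.mem_coe.mp hv))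
    · refine (ConnectedComponent.mem_supp_iff _ _).mpr ?_
      rw [ConnectedComponent.sound (hfadj a).reachable.symm]
      exact hAsupp a.1 a.2
  · -- cardinality
    have hdisj2 : Disjoint (↑A : Set V) (Set.range f) := by
      rw [Set.disjoint_right]
      rintro x ⟨a, rfl⟩
      exact fun h => hfnA a (Finset.mem_coe.mp h)
    have h1 : ((↑A : Set V) ∪ Set.range f).ncard = A.card + A.card := by
      rw [Set.ncard_union_eq hdisj2, Set.ncard_coe_finset, ← Set.image_univ,
        Set.ncard_image_of_injective _ hfinj, Set.ncard_univ, Nat.card_eq_fintype_card,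
        Fintype.card_coe]
    show (2 * A.card : ℝ) ≤ (((↑A : Set V) ∪ Set.range f).ncard : ℝ)
    rw [h1]; push_cast; ring_nf; rfl

/-- Let G be a graph on N vertices with minimum degree at least N − N/8, 3-edge-coloured,
with no monochromatic component having a matching saturating at least N/2 vertices and all
monochromatic components on fewer than 3N/4 vertices. Then for each pair of monochromatic
components K₁ of the first colour and K₂ of the second colour with at least N/2 vertices
each, there is a monochromatic component K₃ of the third colour such that the supports of
K₁, K₂, K₃ cover the whole vertex set. -/
theorem stmt15 (N : ℕ) (G : SimpleGraph (Fin N))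
    (hdeg : ∀ v, (N : ℝ) - (N : ℝ) / 8 ≤ (G.neighborSet v).ncard)
    (c : Sym2 (Fin N) → Fin 3)
    (hno : ¬ ∃ (i : Fin 3) (M : (colourGraph G c i).Subgraph)
        (K : (colourGraph G c i).ConnectedComponent),
        M.IsMatching ∧ M.verts ⊆ K.supp ∧ (N : ℝ) / 2 ≤ M.verts.ncard)
    (hsmall : ∀ (i : Fin 3) (K : (colourGraph G c i).ConnectedComponent),
      (K.supp.ncard : ℝ) < 3 * (N : ℝ) / 4)
    (K₁ : (colourGraph G c 0).ConnectedComponent)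
    (K₂ : (colourGraph G c 1).ConnectedComponent)
    (h₁ : (N : ℝ) / 2 ≤ K₁.supp.ncard) (h₂ : (N : ℝ) / 2 ≤ K₂.supp.ncard) :
    ∃ K₃ : (colourGraph G c 2).ConnectedComponent,
      K₁.supp ∪ K₂.supp ∪ K₃.supp = Set.univ := by
  classical
  obtain ⟨v₀, hv₀⟩ := K₁.exists_rep
  -- N ≥ 8
  have hdegle : ((G.neighborSet v₀).ncard : ℝ) + 1 ≤ N := by
    have hd : Disjoint (G.neighborSet v₀) {v₀} := by
      simp [Set.disjoint_singleton_right]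
    have h1 : (G.neighborSet v₀ ∪ {v₀}).ncard ≤ (Set.univ : Set (Fin N)).ncard :=
      Set.ncard_le_ncard (Set.subset_univ _) (Set.toFinite _)
    rw [Set.ncard_union_eq hd, Set.ncard_univ, Nat.card_eq_fintype_card, Fintype.card_fin,
      Set.ncard_singleton] at h1
    exact_mod_cast h1
  have hN8 : (8 : ℝ) ≤ (N : ℝ) := by
    have := hdeg v₀; linarith
  -- core counting : few non-neighbours
  have hcore : ∀ v : Fin N, (({u | u ≠ v ∧ ¬ G.Adj v u}).ncard : ℝ) ≤ (N : ℝ) / 8 - 1 := by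
    intro v
    have hd1 : Disjoint (G.neighborSet v) {u | u ≠ v ∧ ¬ G.Adj v u} := by
      rw [Set.disjoint_left]
      rintro u hu ⟨-, hna⟩
      exact hna hu
    have hd2 : Disjoint ({v} : Set (Fin N)) (G.neighborSet v ∪ {u | u ≠ v ∧ ¬ G.Adj v u}) := by
      rw [Set.disjoint_left]
      rintro u rfl (h | ⟨hne, -⟩)
      · exact G.loopless.irrefl _ h
      · exact hne rfl
    have h1 : (({v} : Set (Fin N)) ∪ (G.neighborSet v ∪ {u | u ≠ v ∧ ¬ G.Adj v u})).ncard
        ≤ (Set.univ : Set (Fin N)).ncard :=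
      Set.ncard_le_ncard (Set.subset_univ _) (Set.toFinite _)
    rw [Set.ncard_union_eq hd2, Set.ncard_union_eq hd1, Set.ncard_singleton, Set.ncard_univ,
      Nat.card_eq_fintype_card, Fintype.card_fin] at h1
    have h4 := hdeg v
    have h1' : 1 + (((G.neighborSet v).ncard : ℝ)
        + (({u | u ≠ v ∧ ¬ G.Adj v u}).ncard : ℝ)) ≤ (N : ℝ) := by exact_mod_cast h1
    linarith
  have hni : ∀ (v : Fin N) (S : Set (Fin N)), S ⊆ {u | u ≠ v ∧ ¬ G.Adj v u} →
      ((S.ncard : ℝ)) ≤ (N : ℝ) / 8 - 1 := by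
    intro v S hS
    exact le_trans (Nat.cast_le.mpr (Set.ncard_le_ncard hS (Set.toFinite _))) (hcore v)
  have hfin3 : ∀ x : Fin 3, x = 0 ∨ x = 1 ∨ x = 2 := by decide
  -- forcing lemma
  have hforce : ∀ (i : Fin 3) (K : (colourGraph G c i).ConnectedComponent) (u w : Fin N),
      u ∈ K.supp → G.Adj u w → c s(u, w) = i → w ∈ K.supp := by
    intro i K u w hu hadj hc'
    rw [ConnectedComponent.mem_supp_iff] at hu ⊢
    rw [← hu]
    exact ConnectedComponent.sound
      (Adj.reachable (show (colourGraph G c i).Adj u w from (⟨hadj, hc'⟩ : G.Adj u w ∧ c s(u, w) = i))).symm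
  set S₁ := K₁.supp with hS₁
  set S₂ := K₂.supp with hS₂
  set H := colourGraph G c 2 with hH
  -- colour forcing between regions
  have hb2 : ∀ v b : Fin N, v ∉ S₁ → v ∉ S₂ → b ∈ S₁ ∩ S₂ → G.Adj v b → H.Adj v b := by
    intro v b hv1 hv2 hb hadj
    rcases hfin3 (c s(v, b)) with h | h | h
    · exact absurd (hforce 0 K₁ b v hb.1 hadj.symm (by rwa [Sym2.eq_swap])) hv1
    · exact absurd (hforce 1 K₂ b v hb.2 hadj.symm (by rwa [Sym2.eq_swap])) hv2
    · exact (⟨hadj, h⟩ : G.Adj v b ∧ c s(v, b) = 2)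
  have ha2 : ∀ a b : Fin N, a ∈ S₁ → a ∉ S₂ → b ∈ S₂ → b ∉ S₁ → G.Adj a b → H.Adj a b := by
    intro a b ha1 ha2' hb2' hb1 hadj
    rcases hfin3 (c s(a, b)) with h | h | h
    · exact absurd (hforce 0 K₁ a b ha1 hadj h) hb1
    · exact absurd (hforce 1 K₂ b a hb2' hadj.symm (by rwa [Sym2.eq_swap])) ha2'
    · exact (⟨hadj, h⟩ : G.Adj a b ∧ c s(a, b) = 2)
  -- the intersection is big
  have hBbig : (N : ℝ) / 4 < ((S₁ ∩ S₂).ncard : ℝ) := by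
    by_contra hBle
    push_neg at hBle
    set A₁s := S₁ \ S₂ with hA₁s
    set A₂s := S₂ \ S₁ with hA₂s
    have hA₁card : (N : ℝ) / 4 ≤ (A₁s.ncard : ℝ) := by
      have h := Set.ncard_diff_add_ncard_of_subset (Set.inter_subset_left : S₁ ∩ S₂ ⊆ S₁)
        (Set.toFinite _)
      rw [Set.diff_self_inter] at h
      have : (A₁s.ncard : ℝ) + ((S₁ ∩ S₂).ncard : ℝ) = (S₁.ncard : ℝ) := by exact_mod_cast h
      linarith
    have hA₂card : (N : ℝ) / 4 ≤ (A₂s.ncard : ℝ) := by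
      have h := Set.ncard_diff_add_ncard_of_subset (Set.inter_subset_right : S₁ ∩ S₂ ⊆ S₂)
        (Set.toFinite _)
      rw [Set.diff_inter_self_eq_diff] at h
      have : (A₂s.ncard : ℝ) + ((S₁ ∩ S₂).ncard : ℝ) = (S₂.ncard : ℝ) := by exact_mod_cast h
      linarith
    set A₁f := A₁s.toFinset with hA₁f
    set A₂f := A₂s.toFinset with hA₂f
    have hA₁fcard : (A₁f.card : ℝ) = A₁s.ncard := by
      rw [Set.ncard_eq_toFinset_card']
    have hA₂fcard : (A₂f.card : ℝ) = A₂s.ncard := by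
      rw [Set.ncard_eq_toFinset_card']
    have hedge : ∀ a ∈ A₁f, ∀ b ∈ A₂f, G.Adj a b → H.Adj a b := by
      intro a ha b hb hadj
      rw [hA₁f, Set.mem_toFinset] at ha
      rw [hA₂f, Set.mem_toFinset] at hb
      exact ha2 a b ha.1 ha.2 hb.1 hb.2 hadj
    set k : ℝ := (N : ℝ) / 8 - 1 with hkdef
    have hk : 0 ≤ k := by rw [hkdef]; linarith
    have hn12 : ∀ a ∈ A₁f, ((A₂f.filter fun b => ¬ H.Adj a b).card : ℝ) ≤ k := by
      intro a ha
      rw [← Set.ncard_coe_finset]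
      refine hni a _ ?_
      intro b hb
      rw [Finset.coe_filter, Set.mem_setOf_eq] at hb
      obtain ⟨hbmem, hnadj⟩ := hb
      rw [hA₂f, Set.mem_toFinset] at hbmem
      rw [hA₁f, Set.mem_toFinset] at ha
      refine ⟨fun h => hbmem.2 (h ▸ ha.1), fun hGadj => hnadj ?_⟩
      exact hedge a (by rw [hA₁f, Set.mem_toFinset]; exact ha) b
        (by rw [hA₂f, Set.mem_toFinset]; exact hbmem) hGadj
    have hn21 : ∀ b ∈ A₂f, ((A₁f.filter fun a => ¬ H.Adj a b).card : ℝ) ≤ k := by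
      intro b hb
      rw [← Set.ncard_coe_finset]
      refine hni b _ ?_
      intro a ha
      rw [Finset.coe_filter, Set.mem_setOf_eq] at ha
      obtain ⟨hamem, hnadj⟩ := ha
      rw [hA₁f, Set.mem_toFinset] at hamem
      rw [hA₂f, Set.mem_toFinset] at hb
      refine ⟨fun h => hamem.2 (h ▸ hb.1), fun hGadj => hnadj ?_⟩
      exact hedge a (by rw [hA₁f, Set.mem_toFinset]; exact hamem) b
        (by rw [hA₂f, Set.mem_toFinset]; exact hb) hGadj.symm
    have hdisj12 : ∀ a ∈ A₁f, a ∉ A₂f := by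
      intro a ha hb
      rw [hA₁f, Set.mem_toFinset] at ha
      rw [hA₂f, Set.mem_toFinset] at hb
      exact ha.2 hb.1
    have hdisj21 : ∀ a ∈ A₂f, a ∉ A₁f := by
      intro a ha hb
      rw [hA₁f, Set.mem_toFinset] at hb
      rw [hA₂f, Set.mem_toFinset] at ha
      exact ha.2 hb.1
    have hcards1 : 2 * k + 1 ≤ (A₁f.card : ℝ) := by rw [hA₁fcard, hkdef]; linarith
    have hcards2 : 2 * k + 1 ≤ (A₂f.card : ℝ) := by rw [hA₂fcard, hkdef]; linarith
    -- the flipped filter bounds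
    have hn21' : ∀ a ∈ A₂f, ((A₁f.filter fun b => ¬ H.Adj a b).card : ℝ) ≤ k := by
      intro a ha
      have : (A₁f.filter fun b => ¬ H.Adj a b) = (A₁f.filter fun b => ¬ H.Adj b a) := by
        apply Finset.filter_congr
        intro b _
        rw [H.adj_comm]
      rw [this]
      exact hn21 a ha
    have hn12' : ∀ b ∈ A₁f, ((A₂f.filter fun a => ¬ H.Adj a b).card : ℝ) ≤ k := by
      intro b hb
      have : (A₂f.filter fun a => ¬ H.Adj a b) = (A₂f.filter fun a => ¬ H.Adj b a) := by
        apply Finset.filter_congr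
        intro a _
        rw [H.adj_comm]
      rw [this]
      exact hn12 b hb
    by_cases hc : A₁f.card ≤ A₂f.card
    · obtain ⟨K, M, hM, hsub, hcard⟩ :=
        aux_matching H A₁f A₂f k hk hdisj12 hcards1 hcards2 hn12 hn21 hc
      exact hno ⟨2, M, K, hM, hsub, by linarith [hA₁card, hA₁fcard, hcard]⟩
    · obtain ⟨K, M, hM, hsub, hcard⟩ :=
        aux_matching H A₂f A₁f k hk hdisj21 hcards2 hcards1 hn21' hn12' (le_of_not_ge hc)
      exact hno ⟨2, M, K, hM, hsub, by linarith [hA₂card, hA₂fcard, hcard]⟩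
  -- second phase
  by_cases hWne : ∃ w, w ∉ S₁ ∪ S₂
  · obtain ⟨w₀, hw₀⟩ := hWne
    refine ⟨H.connectedComponentMk w₀, ?_⟩
    apply Set.eq_univ_of_forall
    intro v
    by_cases hv : v ∈ S₁ ∪ S₂
    · exact Or.inl hv
    · refine Or.inr ((ConnectedComponent.mem_supp_iff _ _).mpr ?_)
      -- find a common neighbour of v and w₀ in S₁ ∩ S₂
      have hcommon : ∀ u, u ∉ S₁ ∪ S₂ →
          ((S₁ ∩ S₂) \ {x | G.Adj u x}) ⊆ {x | x ≠ u ∧ ¬ G.Adj u x} := by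
        intro u hu x hx
        exact ⟨fun h => hu (Or.inl (h ▸ hx.1.1)), hx.2⟩
      have hv1 : ((((S₁ ∩ S₂) \ {x | G.Adj v x}).ncard : ℝ)) ≤ (N : ℝ) / 8 - 1 :=
        hni v _ (hcommon v hv)
      have hw1 : ((((S₁ ∩ S₂) \ {x | G.Adj w₀ x}).ncard : ℝ)) ≤ (N : ℝ) / 8 - 1 :=
        hni w₀ _ (hcommon w₀ hw₀)
      set T := (S₁ ∩ S₂) \ (((S₁ ∩ S₂) \ {x | G.Adj v x}) ∪ ((S₁ ∩ S₂) \ {x | G.Adj w₀ x}))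
        with hT
      have hTcard : (0 : ℝ) < (T.ncard : ℝ) := by
        have h1 := Set.ncard_le_ncard_diff_add_ncard (S₁ ∩ S₂)
          ((((S₁ ∩ S₂) \ {x | G.Adj v x}) ∪ ((S₁ ∩ S₂) \ {x | G.Adj w₀ x})))
          (Set.toFinite _)
        have h2 := Set.ncard_union_le ((S₁ ∩ S₂) \ {x | G.Adj v x})
          ((S₁ ∩ S₂) \ {x | G.Adj w₀ x})
        have hnat : (S₁ ∩ S₂).ncard
            ≤ ((S₁ ∩ S₂) \ (((S₁ ∩ S₂) \ {x | G.Adj v x}) ∪ ((S₁ ∩ S₂) \ {x | G.Adj w₀ x}))).ncard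
            + (((S₁ ∩ S₂) \ {x | G.Adj v x}).ncard)
            + (((S₁ ∩ S₂) \ {x | G.Adj w₀ x}).ncard) := by omega
        rw [← hT] at hnat
        have h3 : ((S₁ ∩ S₂).ncard : ℝ) ≤ (T.ncard : ℝ)
            + ((((S₁ ∩ S₂) \ {x | G.Adj v x}).ncard : ℝ))
            + ((((S₁ ∩ S₂) \ {x | G.Adj w₀ x}).ncard : ℝ)) := by exact_mod_cast hnat
        linarith
      have hTne : T.Nonempty := by
        rw [Set.nonempty_iff_ne_empty]
        intro h
        rw [h, Set.ncard_empty] at hTcard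
        simp at hTcard
      obtain ⟨b, hb⟩ := hTne
      rw [hT, Set.mem_diff, Set.mem_union, not_or, Set.mem_diff, Set.mem_diff,
        not_and, not_and, not_not, not_not] at hb
      obtain ⟨hbB, hbv, hbw⟩ := hb
      have hadjv : G.Adj v b := hbv hbB
      have hadjw : G.Adj w₀ b := hbw hbB
      have h2v : H.Adj v b := hb2 v b (fun h => hv (Or.inl h)) (fun h => hv (Or.inr h)) hbB hadjv
      have h2w : H.Adj w₀ b :=
        hb2 w₀ b (fun h => hw₀ (Or.inl h)) (fun h => hw₀ (Or.inr h)) hbB hadjw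
      exact ConnectedComponent.sound (h2v.reachable.trans h2w.reachable.symm)
  · push_neg at hWne
    refine ⟨H.connectedComponentMk v₀, ?_⟩
    apply Set.eq_univ_of_forall
    intro v
    exact Or.inl (hWne v)
end

section
/- For every integer ℓ ≥ 2 there exists a graph Ĝ on 8ℓ vertices with minimum degree 7ℓ − 2 together with a colouring of the edges of Ĝ with three colours that contains no monochromatic cycle of length 4ℓ. -/
open SimpleGraph

namespace Stmt17Aux

open Finset

abbrev B := Bool × Bool × Bool

def cpl (a : B) : B := (!a.1, !a.2.1, !a.2.2)

def col (a b : B) : Fin 3 :=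
  if a = b then (if a.1 = a.2.1 then 0 else if a.2.1 = a.2.2 then 1 else 2)
  else if a.1 = b.1 ∧ a.2.1 = b.2.1 then 1
  else if a.1 = b.1 ∧ a.2.2 = b.2.2 then 0
  else if a.2.1 = b.2.1 ∧ a.2.2 = b.2.2 then 2
  else if a.1 = b.1 then 0
  else if a.2.1 = b.2.1 then 1
  else if a.2.2 = b.2.2 then 2
  else 0

def beta (i : Fin 3) (a : B) : Bool :=
  match i with
  | 0 => a.1
  | 1 => a.2.1
  | 2 => a.2.2

def covP (i : Fin 3) (a : B) : Bool :=
  match i with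
  | 0 => a.1 == a.2.1
  | 1 => a.2.1 == a.2.2
  | 2 => a.2.2 == a.1

def pr (i : Fin 3) (bb : Bool) : B × B :=
  match i with
  | 0 => ((bb, bb, false), (bb, bb, true))
  | 1 => ((false, bb, bb), (true, bb, bb))
  | 2 => ((bb, false, bb), (bb, true, bb))

lemma col_symm : ∀ a b : B, col a b = col b a := by decide

lemma col_beta : ∀ (i : Fin 3) (a b : B), ¬ a = cpl b → col a b = i →
    beta i a = beta i b := by decide

lemma col_cov : ∀ (i : Fin 3) (a b : B), ¬ a = cpl b → col a b = i →
    (covP i a = true ∨ covP i b = true) := by decide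

lemma cov_pair : ∀ (i : Fin 3) (bb : Bool) (a : B),
    (covP i a = true ∧ beta i a = bb) ↔ (a = (pr i bb).1 ∨ a = (pr i bb).2) := by decide

lemma cpl_ne_self : ∀ a : B, ¬ a = cpl a := by decide

lemma ne_cpl_symm : ∀ a b : B, ¬ a = cpl b → ¬ b = cpl a := by decide

lemma pr_ne : ∀ (i : Fin 3) (bb : Bool), (pr i bb).1 ≠ (pr i bb).2 := by decide

/-- group sizes -/
def nn (ℓ : ℕ) : B → ℕ
  | (false, false, false) => ℓ - 2
  | (false, false, true) => ℓ
  | (false, true, false) => ℓ + 1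
  | (false, true, true) => ℓ + 1
  | (true, false, false) => ℓ + 1
  | (true, false, true) => ℓ + 1
  | (true, true, false) => ℓ
  | (true, true, true) => ℓ - 2

/-- group interval left endpoints -/
def lo (ℓ : ℕ) : B → ℕ
  | (false, false, false) => 0
  | (false, false, true) => ℓ - 2
  | (false, true, false) => 2 * ℓ - 2
  | (false, true, true) => 3 * ℓ - 1
  | (true, false, false) => 4 * ℓ
  | (true, false, true) => 5 * ℓ + 1
  | (true, true, false) => 6 * ℓ + 2
  | (true, true, true) => 7 * ℓ + 2

/-- the type of a vertex index -/
def g (ℓ : ℕ) (k : ℕ) : B :=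
  if k < ℓ - 2 then (false, false, false)
  else if k < 2 * ℓ - 2 then (false, false, true)
  else if k < 3 * ℓ - 1 then (false, true, false)
  else if k < 4 * ℓ then (false, true, true)
  else if k < 5 * ℓ + 1 then (true, false, false)
  else if k < 6 * ℓ + 2 then (true, false, true)
  else if k < 7 * ℓ + 2 then (true, true, false)
  else (true, true, true)

lemma nn_le (ℓ : ℕ) (a : B) : nn ℓ a ≤ ℓ + 1 := by
  rcases a with ⟨a1, a2, a3⟩
  cases a1 <;> cases a2 <;> cases a3 <;> simp [nn] <;> omega

lemma lo_add_nn_le (ℓ : ℕ) (hℓ : 2 ≤ ℓ) (a : B) : lo ℓ a + nn ℓ a ≤ 8 * ℓ := by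
  rcases a with ⟨a1, a2, a3⟩
  cases a1 <;> cases a2 <;> cases a3 <;> simp [nn, lo] <;> omega

set_option maxHeartbeats 1000000 in
lemma g_eq_iff (ℓ : ℕ) (hℓ : 2 ≤ ℓ) (k : ℕ) (hk : k < 8 * ℓ) (a : B) :
    g ℓ k = a ↔ lo ℓ a ≤ k ∧ k < lo ℓ a + nn ℓ a := by
  rcases a with ⟨a1, a2, a3⟩
  cases a1 <;> cases a2 <;> cases a3 <;>
    (simp only [g, lo, nn, Prod.mk.injEq]; split_ifs <;> simp_all <;> omega)

lemma card_val_Ico (N a b : ℕ) (hbN : b ≤ N) :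
    ((univ : Finset (Fin N)).filter (fun v => a ≤ v.val ∧ v.val < b)).card = b - a := by
  have hlt : ∀ m ∈ Finset.Ico a b, m < N := fun m hm =>
    lt_of_lt_of_le (Finset.mem_Ico.1 hm).2 hbN
  have heq : (univ : Finset (Fin N)).filter (fun v => a ≤ v.val ∧ v.val < b) =
      (Finset.Ico a b).attachFin hlt := by
    ext v
    simp [Finset.mem_attachFin, Finset.mem_Ico]
  rw [heq, Finset.card_attachFin, Nat.card_Ico]

variable (ℓ : ℕ)

def TT (v : Fin (8 * ℓ)) : B := g ℓ v.val

lemma card_class (hℓ : 2 ≤ ℓ) (a : B) :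
    ((univ : Finset (Fin (8 * ℓ))).filter (fun v => TT ℓ v = a)).card = nn ℓ a := by
  have h1 : (univ : Finset (Fin (8 * ℓ))).filter (fun v => TT ℓ v = a) =
      (univ : Finset (Fin (8 * ℓ))).filter
        (fun v => lo ℓ a ≤ v.val ∧ v.val < lo ℓ a + nn ℓ a) := by
    apply Finset.filter_congr
    intro v _
    simpa [TT] using g_eq_iff ℓ hℓ v.val v.isLt a
  rw [h1, card_val_Ico _ _ _ (lo_add_nn_le ℓ hℓ a)]
  omega

def GG : SimpleGraph (Fin (8 * ℓ)) where
  Adj u v := ¬ u = v ∧ ¬ TT ℓ u = cpl (TT ℓ v)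
  symm := by
    refine ⟨fun u v h => ?_⟩
    exact ⟨fun hh => h.1 hh.symm, ne_cpl_symm _ _ h.2⟩
  loopless := by
    refine ⟨fun v h => ?_⟩
    exact h.1 rfl

def cc : Sym2 (Fin (8 * ℓ)) → Fin 3 :=
  Sym2.lift ⟨fun u v => col (TT ℓ u) (TT ℓ v), fun u v => col_symm _ _⟩

lemma neighborSet_eq (v : Fin (8 * ℓ)) :
    (GG ℓ).neighborSet v =
      ↑((univ : Finset (Fin (8 * ℓ))).filter
        (fun u => ¬ u = v ∧ ¬ TT ℓ u = cpl (TT ℓ v))) := by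
  ext u
  simp only [SimpleGraph.mem_neighborSet, Finset.coe_filter, Set.mem_setOf_eq,
    Finset.mem_univ, true_and]
  show (¬ v = u ∧ ¬ TT ℓ v = cpl (TT ℓ u)) ↔ _
  constructor
  · rintro ⟨h1, h2⟩
    exact ⟨fun h => h1 h.symm, ne_cpl_symm _ _ h2⟩
  · rintro ⟨h1, h2⟩
    exact ⟨fun h => h1 h.symm, ne_cpl_symm _ _ h2⟩

lemma deg_eq (hℓ : 2 ≤ ℓ) (v : Fin (8 * ℓ)) :
    ((GG ℓ).neighborSet v).ncard = 8 * ℓ - nn ℓ (cpl (TT ℓ v)) - 1 := by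
  rw [neighborSet_eq, Set.ncard_coe_finset]
  have h2 : (univ : Finset (Fin (8 * ℓ))).filter
      (fun u => ¬ u = v ∧ ¬ TT ℓ u = cpl (TT ℓ v)) =
      ((univ : Finset (Fin (8 * ℓ))).filter
        (fun u => ¬ TT ℓ u = cpl (TT ℓ v))).erase v := by
    ext u
    constructor
    · intro hu
      have hu' := Finset.mem_filter.mp hu
      exact Finset.mem_erase.mpr ⟨hu'.2.1, Finset.mem_filter.mpr ⟨Finset.mem_univ _, hu'.2.2⟩⟩
    · intro hu
      have hu' := Finset.mem_erase.mp hu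
      exact Finset.mem_filter.mpr ⟨Finset.mem_univ _, hu'.1, (Finset.mem_filter.mp hu'.2).2⟩
  have hv : v ∈ (univ : Finset (Fin (8 * ℓ))).filter
      (fun u => ¬ TT ℓ u = cpl (TT ℓ v)) := by
    simp only [Finset.mem_filter, Finset.mem_univ, true_and]
    exact cpl_ne_self _
  have h4 := Finset.card_filter_add_card_filter_not
    (s := (univ : Finset (Fin (8 * ℓ)))) (p := fun u => TT ℓ u = cpl (TT ℓ v))
  simp only [Finset.card_univ, Fintype.card_fin] at h4
  rw [card_class ℓ hℓ (cpl (TT ℓ v))] at h4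
  rw [h2, Finset.card_erase_of_mem hv]
  omega

/-- support indexing agrees with getVert -/
lemma support_getElem_eq {V : Type*} {H : SimpleGraph V} {u x : V} (p : H.Walk u x)
    (k : ℕ) (hk : k < p.support.length) : p.support[k] = p.getVert k := by
  induction p generalizing k with
  | nil =>
    simp only [SimpleGraph.Walk.support_nil, List.length_singleton] at hk
    have : k = 0 := by omega
    subst this
    rfl
  | cons h q ih =>
    cases k with
    | zero => simp
    | succ k =>
      simp only [SimpleGraph.Walk.support_cons, List.getElem_cons_succ,
        SimpleGraph.Walk.getVert_cons_succ]
      apply ih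

lemma cycle_getVert_inj {V : Type*} {H : SimpleGraph V} {v : V} (w : H.Walk v v)
    (hc : w.IsCycle) {m n : ℕ} (hm : m < w.length) (hn : n < w.length) (hmn : m ≠ n) :
    w.getVert m ≠ w.getVert n := by
  have hnodup : w.support.tail.Nodup := hc.support_nodup
  have hslen : w.support.length = w.length + 1 := SimpleGraph.Walk.length_support w
  have htlen : w.support.tail.length = w.length := by
    rw [List.length_tail, hslen]
    omega
  have hL3 : 3 ≤ w.length := hc.three_le_length
  have htail : ∀ (j : ℕ) (hj : j < w.support.tail.length),
      w.support.tail[j]'hj = w.getVert (j + 1) := by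
    intro j hj
    rw [List.getElem_tail]
    exact support_getElem_eq w (j + 1) (by omega)
  have h0 : w.support.tail[w.length - 1]'(by omega) = w.getVert 0 := by
    rw [htail (w.length - 1) (by omega)]
    rw [show w.length - 1 + 1 = w.length by omega, SimpleGraph.Walk.getVert_length,
      SimpleGraph.Walk.getVert_zero]
  intro heq
  rcases Nat.eq_zero_or_pos m with hm0 | hm0 <;> rcases Nat.eq_zero_or_pos n with hn0 | hn0
  · exact hmn (hm0.trans hn0.symm)
  · subst hm0
    have en : w.support.tail[n - 1]'(by omega) = w.getVert n := by
      rw [htail (n - 1) (by omega), show n - 1 + 1 = n by omega]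
    have e1 : w.support.tail[w.length - 1]'(by omega) =
        w.support.tail[n - 1]'(by omega) := by
      rw [h0, en]; exact heq
    have := (List.Nodup.getElem_inj_iff hnodup).mp e1
    omega
  · subst hn0
    have em : w.support.tail[m - 1]'(by omega) = w.getVert m := by
      rw [htail (m - 1) (by omega), show m - 1 + 1 = m by omega]
    have e1 : w.support.tail[m - 1]'(by omega) =
        w.support.tail[w.length - 1]'(by omega) := by
      rw [em, h0]; exact heq
    have := (List.Nodup.getElem_inj_iff hnodup).mp e1
    omega
  · have em : w.support.tail[m - 1]'(by omega) = w.getVert m := by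
      rw [htail (m - 1) (by omega), show m - 1 + 1 = m by omega]
    have en : w.support.tail[n - 1]'(by omega) = w.getVert n := by
      rw [htail (n - 1) (by omega), show n - 1 + 1 = n by omega]
    have e1 : w.support.tail[m - 1]'(by omega) =
        w.support.tail[n - 1]'(by omega) := by
      rw [em, en]; exact heq
    have := (List.Nodup.getElem_inj_iff hnodup).mp e1
    omega

lemma pair_nn_le (hℓ : 2 ≤ ℓ) (i : Fin 3) (bb : Bool) :
    nn ℓ (pr i bb).1 + nn ℓ (pr i bb).2 ≤ 2 * ℓ - 1 := by
  fin_cases i <;> cases bb <;> simp [pr, nn] <;> omega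

lemma no_mono_cycle (hℓ : 2 ≤ ℓ) :
    ¬ ∃ (i : Fin 3) (v : Fin (8 * ℓ)) (w : (colourGraph (GG ℓ) (cc ℓ) i).Walk v v),
        w.IsCycle ∧ w.length = 4 * ℓ := by
  rintro ⟨i, v, w, hcyc, hlen⟩
  have hAdj : ∀ u1 u2 : Fin (8 * ℓ), (colourGraph (GG ℓ) (cc ℓ) i).Adj u1 u2 →
      ¬ TT ℓ u1 = cpl (TT ℓ u2) ∧ col (TT ℓ u1) (TT ℓ u2) = i := by
    intro u1 u2 h
    refine ⟨h.1.2, ?_⟩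
    have h2 := h.2
    simpa [cc] using h2
  set bb := beta i (TT ℓ v) with hbb
  -- all vertices of the walk lie in the same half
  have halfconst : ∀ k, k ≤ w.length → beta i (TT ℓ (w.getVert k)) = bb := by
    intro k
    induction k with
    | zero => intro _; simp [SimpleGraph.Walk.getVert_zero, hbb]
    | succ k ih =>
      intro hk
      have hk' : k < w.length := by omega
      have hadj := w.adj_getVert_succ hk'
      obtain ⟨hne, hcol⟩ := hAdj _ _ hadj
      have hb := col_beta i _ _ hne hcol
      rw [← hb]
      exact ih (by omega)
  set p1 := (pr i bb).1 with hp1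
  set p2 := (pr i bb).2 with hp2
  set K := (univ : Finset (Fin (8 * ℓ))).filter (fun u => TT ℓ u = p1 ∨ TT ℓ u = p2)
    with hK
  have hKcard : K.card ≤ 2 * ℓ - 1 := by
    have hsplit : K = ((univ : Finset (Fin (8 * ℓ))).filter (fun u => TT ℓ u = p1)) ∪
        ((univ : Finset (Fin (8 * ℓ))).filter (fun u => TT ℓ u = p2)) := by
      rw [hK, Finset.filter_or]
    have hdisj : Disjoint
        ((univ : Finset (Fin (8 * ℓ))).filter (fun u => TT ℓ u = p1))
        ((univ : Finset (Fin (8 * ℓ))).filter (fun u => TT ℓ u = p2)) := by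
      rw [Finset.disjoint_left]
      intro a ha hb
      simp only [Finset.mem_filter] at ha hb
      exact pr_ne i bb (ha.2.symm.trans hb.2)
    rw [hsplit, Finset.card_union_of_disjoint hdisj, card_class ℓ hℓ, card_class ℓ hℓ]
    exact pair_nn_le ℓ hℓ i bb
  -- the map from alternate edges of the cycle into K
  set f : Fin (2 * ℓ) → Fin (8 * ℓ) := fun j =>
    if covP i (TT ℓ (w.getVert (2 * j.val))) = true then w.getVert (2 * j.val)
    else w.getVert (2 * j.val + 1) with hf
  have hmem : ∀ j : Fin (2 * ℓ), f j ∈ K := by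
    intro j
    have hjl : j.val < 2 * ℓ := j.isLt
    have hj2 : 2 * j.val < w.length := by omega
    have hadj := w.adj_getVert_succ hj2
    obtain ⟨hne, hcol⟩ := hAdj _ _ hadj
    have hcov := col_cov i _ _ hne hcol
    have hb1 : beta i (TT ℓ (w.getVert (2 * j.val))) = bb :=
      halfconst _ (by omega)
    have hb2 : beta i (TT ℓ (w.getVert (2 * j.val + 1))) = bb :=
      halfconst _ (by omega)
    by_cases hc : covP i (TT ℓ (w.getVert (2 * j.val))) = true
    · have hin := (cov_pair i bb (TT ℓ (w.getVert (2 * j.val)))).mp ⟨hc, hb1⟩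
      simp only [hf, if_pos hc, hK, Finset.mem_filter, Finset.mem_univ, true_and]
      exact hin
    · have hc2 : covP i (TT ℓ (w.getVert (2 * j.val + 1))) = true := by
        rcases hcov with h | h
        · exact absurd h hc
        · exact h
      have hin := (cov_pair i bb (TT ℓ (w.getVert (2 * j.val + 1)))).mp ⟨hc2, hb2⟩
      simp only [hf, if_neg hc, hK, Finset.mem_filter, Finset.mem_univ, true_and]
      exact hin
  have hinj : ∀ j j' : Fin (2 * ℓ), j ≠ j' → f j ≠ f j' := by
    intro j j' hjj
    have hv : j.val ≠ j'.val := fun h => hjj (Fin.ext h)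
    have hj : j.val < 2 * ℓ := j.isLt
    have hj' : j'.val < 2 * ℓ := j'.isLt
    by_cases h1 : covP i (TT ℓ (w.getVert (2 * j.val))) = true <;>
      by_cases h2 : covP i (TT ℓ (w.getVert (2 * j'.val))) = true
    · rw [hf]; simp only [if_pos h1, if_pos h2]
      exact cycle_getVert_inj w hcyc (by omega) (by omega) (by omega)
    · rw [hf]; simp only [if_pos h1, if_neg h2]
      exact cycle_getVert_inj w hcyc (by omega) (by omega) (by omega)
    · rw [hf]; simp only [if_neg h1, if_pos h2]
      exact cycle_getVert_inj w hcyc (by omega) (by omega) (by omega)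
    · rw [hf]; simp only [if_neg h1, if_neg h2]
      exact cycle_getVert_inj w hcyc (by omega) (by omega) (by omega)
  have hcard : 2 * ℓ ≤ K.card := by
    have hle := Finset.card_le_card_of_injOn
      (s := (univ : Finset (Fin (2 * ℓ)))) (t := K) f (fun j _ => hmem j)
      (fun j _ j' _ h => by
        by_contra hne
        exact hinj j j' hne h)
    simpa using hle
  omega

end Stmt17Aux

/-- For every ℓ ≥ 2 there exists a graph Ĝ on 8ℓ vertices with minimum degree 7ℓ − 2
together with a 3-colouring of its edges containing no monochromatic cycle of length 4ℓ. -/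
theorem stmt17 (ℓ : ℕ) (hℓ : 2 ≤ ℓ) :
    ∃ (G : SimpleGraph (Fin (8 * ℓ))) (c : Sym2 (Fin (8 * ℓ)) → Fin 3),
      (∀ v, 7 * ℓ - 2 ≤ (G.neighborSet v).ncard) ∧
      (∃ v, (G.neighborSet v).ncard = 7 * ℓ - 2) ∧
      ¬ ∃ (i : Fin 3) (v : Fin (8 * ℓ)) (w : (colourGraph G c i).Walk v v),
          w.IsCycle ∧ w.length = 4 * ℓ := by
  classical
  refine ⟨Stmt17Aux.GG ℓ, Stmt17Aux.cc ℓ, ?_, ?_, Stmt17Aux.no_mono_cycle ℓ hℓ⟩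
  · intro v
    rw [Stmt17Aux.deg_eq ℓ hℓ v]
    have hle := Stmt17Aux.nn_le ℓ (Stmt17Aux.cpl (Stmt17Aux.TT ℓ v))
    omega
  · refine ⟨⟨2 * ℓ - 2, by omega⟩, ?_⟩
    rw [Stmt17Aux.deg_eq ℓ hℓ]
    have hT : Stmt17Aux.TT ℓ ⟨2 * ℓ - 2, by omega⟩ = (false, true, false) := by
      have hg := (Stmt17Aux.g_eq_iff ℓ hℓ (2 * ℓ - 2) (by omega)
        (false, true, false)).mpr (by simp only [Stmt17Aux.lo, Stmt17Aux.nn]; omega)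
      simpa [Stmt17Aux.TT] using hg
    rw [hT]
    have hcpl : Stmt17Aux.cpl (false, true, false) = (true, false, true) := rfl
    rw [hcpl]
    have hnn : Stmt17Aux.nn ℓ (true, false, true) = ℓ + 1 := rfl
    rw [hnn]
    omega
end
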